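/- arXiv:1801.05318 — 5 statements merged into one kernel-verified Lean document; each statement's English description precedes it below -/
import Mathlib

section
/- For any nontrivial tree T, if F_t(T) = 2 pc(T) then T has a unique minimum path cover and every path in this cover starts and ends at distinct leaves of T. -/
/-- The forcing process: vertices that eventually get colored starting from `S`.
A colored vertex with exactly one uncolored neighbor forces that neighbor. -/
inductive SimpleGraph.Forced {V : Type*} (G : SimpleGraph V) (S : Set V) : V → Prop
  | init (v : V) (hv : v ∈ S) : SimpleGraph.Forced G S v
  | force (u w : V) (hu : SimpleGraph.Forced G S u) (hadj : G.Adj u w)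
      (huniq : ∀ x, G.Adj u x → x ≠ w → SimpleGraph.Forced G S x) :
      SimpleGraph.Forced G S w

/-- `S` is a zero forcing set if the forcing process colors every vertex. -/
def SimpleGraph.IsZeroForcingSet {V : Type*} (G : SimpleGraph V) (S : Set V) : Prop :=
  ∀ v, G.Forced S v

/-- The zero forcing number `Z(G)`. -/
noncomputable def SimpleGraph.zeroForcingNumber {V : Type*} (G : SimpleGraph V) : ℕ :=
  sInf {n | ∃ S : Set V, G.IsZeroForcingSet S ∧ S.ncard = n}

/-- A total forcing set: a zero forcing set inducing a subgraph without isolated vertices. -/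
def SimpleGraph.IsTotalForcingSet {V : Type*} (G : SimpleGraph V) (S : Set V) : Prop :=
  G.IsZeroForcingSet S ∧ ∀ v ∈ S, ∃ u ∈ S, G.Adj v u

/-- The total forcing number `F_t(G)`. -/
noncomputable def SimpleGraph.totalForcingNumber {V : Type*} (G : SimpleGraph V) : ℕ :=
  sInf {n | ∃ S : Set V, G.IsTotalForcingSet S ∧ S.ncard = n}

/-- A set of vertices that is the vertex set of a path (as a subgraph) of `G`. -/
def SimpleGraph.IsPathSet {V : Type*} (G : SimpleGraph V) (P : Set V) : Prop :=
  ∃ (u v : V) (w : G.Walk u v), w.IsPath ∧ {x | x ∈ w.support} = P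

/-- A path cover: a collection of vertex-disjoint paths partitioning the vertex set. -/
def SimpleGraph.IsPathCover {V : Type*} (G : SimpleGraph V) (P : Set (Set V)) : Prop :=
  (∀ Q ∈ P, G.IsPathSet Q) ∧ P.PairwiseDisjoint id ∧ ⋃₀ P = Set.univ

/-- The path cover number `pc(G)`. -/
noncomputable def SimpleGraph.pathCoverNumber {V : Type*} (G : SimpleGraph V) : ℕ :=
  sInf {n | ∃ P : Set (Set V), G.IsPathCover P ∧ P.ncard = n}

/-- The matching number `α'(G)`. -/
noncomputable def SimpleGraph.matchingNumber {V : Type*} (G : SimpleGraph V) : ℕ :=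
  sSup {n | ∃ M : G.Subgraph, M.IsMatching ∧ M.edgeSet.ncard = n}

/-- A leaf is a vertex with exactly one neighbor. -/
def SimpleGraph.IsLeaf {V : Type*} (G : SimpleGraph V) (v : V) : Prop :=
  (G.neighborSet v).ncard = 1


set_option linter.unusedSectionVars false

namespace ZF
open SimpleGraph Walk

variable {V : Type*} {T : SimpleGraph V}

/-- forcing is monotone -/
lemma forced_mono {S S' : Set V} (hss : S ⊆ S') {v : V} (h : T.Forced S v) :
    T.Forced S' v := by
  induction h with
  | init v hv => exact .init v (hss hv)
  | force u w hu hadj huniq ih ih2 => exact .force u w ih hadj (fun x h1 h2 => ih2 x h1 h2)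

section Root

variable (hT : T.IsTree) (r : V)

/-- the unique path from `v` to the root `r` -/
noncomputable def pTo (v : V) : T.Walk v r := (hT.existsUnique_path v r).exists.choose

lemma pTo_isPath (v : V) : (pTo hT r v).IsPath := (hT.existsUnique_path v r).exists.choose_spec

lemma pTo_unique {v : V} (q : T.Walk v r) (hq : q.IsPath) : q = pTo hT r v :=
  (hT.existsUnique_path v r).unique hq (pTo_isPath hT r v)

lemma pTo_r : pTo hT r r = Walk.nil := (pTo_unique hT r Walk.nil (by simp)).symm

/-- the parent of a vertex (parent of the root is the root) -/
noncomputable def par (v : V) : V := (pTo hT r v).getVert 1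

/-- depth of a vertex -/
noncomputable def dep (v : V) : ℕ := (pTo hT r v).length

lemma par_r : par hT r r = r := by
  rw [par, pTo_r]; rfl

lemma dep_r : dep hT r r = 0 := by simp [dep, pTo_r]

lemma eq_r_of_dep_eq_zero {v : V} (h : dep hT r v = 0) : v = r := by
  have : (pTo hT r v).Nil := nil_iff_length_eq.2 h
  exact this.eq

lemma pTo_not_nil {v : V} (h : v ≠ r) : ¬ (pTo hT r v).Nil := not_nil_of_ne h

lemma adj_par {v : V} (h : v ≠ r) : T.Adj v (par hT r v) :=
  adj_snd (pTo_not_nil hT r h)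

lemma pTo_par {v : V} (h : v ≠ r) : pTo hT r (par hT r v) = (pTo hT r v).tail :=
  (pTo_unique hT r _ ((pTo_isPath hT r v).tail)).symm

lemma dep_par {v : V} (h : v ≠ r) : dep hT r (par hT r v) + 1 = dep hT r v := by
  rw [dep, dep, pTo_par hT r h]
  exact length_tail_add_one (pTo_not_nil hT r h)

lemma pTo_cons {v : V} (h : v ≠ r) :
    pTo hT r v = Walk.cons (adj_par hT r h) (pTo hT r (par hT r v)) := by
  rw [pTo_par hT r h]
  exact (cons_tail_eq _ (pTo_not_nil hT r h)).symm

/-- adjacent vertex not on the path to root: it is a child -/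
lemma par_of_not_mem {x z : V} (hadj : T.Adj x z) (hz : z ∉ (pTo hT r x).support) :
    par hT r z = x ∧ dep hT r z = dep hT r x + 1 := by
  have hq : (Walk.cons hadj.symm (pTo hT r x)).IsPath :=
    (pTo_isPath hT r x).cons hz
  have he : Walk.cons hadj.symm (pTo hT r x) = pTo hT r z := pTo_unique hT r _ hq
  constructor
  · rw [par, ← he, getVert_cons_succ, getVert_zero]
  · rw [dep, dep, ← he, length_cons]

/-- adjacent vertex on the path to root: it is the parent -/
lemma par_of_mem {x z : V} (hadj : T.Adj x z) (hz : z ∈ (pTo hT r x).support) :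
    z = par hT r x := by
  classical
  have ht : ((pTo hT r x).takeUntil z hz).IsPath := (pTo_isPath hT r x).takeUntil hz
  have hsingle : (Walk.cons hadj (Walk.nil : T.Walk z z)).IsPath := by simp [hadj.ne]
  have huniq := (hT.existsUnique_path x z).unique ht hsingle
  have hspec := (pTo hT r x).take_spec hz
  rw [huniq] at hspec
  simp only [Walk.cons_append, Walk.nil_append] at hspec
  obtain ⟨q, hq2⟩ : ∃ q : T.Walk z r, pTo hT r x = Walk.cons hadj q := ⟨_, hspec.symm⟩
  rw [par, hq2, getVert_cons_succ, getVert_zero]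

lemma dichotomy {x z : V} (hadj : T.Adj x z) : z = par hT r x ∨ x = par hT r z := by
  classical
  by_cases hz : z ∈ (pTo hT r x).support
  · exact Or.inl (par_of_mem hT r hadj hz)
  · exact Or.inr (par_of_not_mem hT r hadj hz).1.symm

lemma ne_r_of_par {x z : V} (hadj : T.Adj x z) (h : x = par hT r z) : z ≠ r := by
  rintro rfl
  rw [par_r] at h
  subst h
  exact hadj.ne rfl

lemma dep_child {x z : V} (hadj : T.Adj x z) (h : x = par hT r z) :
    dep hT r z = dep hT r x + 1 := by
  have hz : z ≠ r := ne_r_of_par hT r hadj h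
  have := dep_par hT r hz
  rw [← h] at this
  omega

/-- going down: walk whose first step is downward, ends at a vertex whose
parent is on the walk -/
lemma down_lemma : ∀ {c e : V} (q : T.Walk c e), q.IsPath → (hnn : ¬ q.Nil) →
    c = par hT r (q.getVert 1) → par hT r e ∈ q.support ∧ e ≠ r := by
  intro c e q
  induction q with
  | nil => intro _ hnn; simp at hnn
  | @cons c x₁ e h q' ih =>
    intro hq _ hfirst
    rw [getVert_cons_succ, getVert_zero] at hfirst
    by_cases hq' : q'.Nil
    · have hx₁e : x₁ = e := hq'.eq
      subst hx₁e
      refine ⟨?_, ne_r_of_par hT r h hfirst⟩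
      rw [← hfirst]; simp
    · have hx₂ : q'.getVert 1 ∈ q'.support := by
        have h1 : q'.tail.support = q'.support.tail := support_tail_of_not_nil q' hq'
        have h2 : q'.getVert 1 ∈ q'.tail.support := start_mem_support _
        rw [h1] at h2
        exact List.mem_of_mem_tail h2
      have hadj12 : T.Adj x₁ (q'.getVert 1) := adj_snd hq'
      have hdownstep : x₁ = par hT r (q'.getVert 1) := by
        rcases dichotomy hT r hadj12 with h1 | h1
        · exfalso
          have hc : c ∉ q'.support := ((Walk.cons_isPath_iff _ _).1 hq).2
          rw [h1, ← hfirst] at hx₂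
          exact hc hx₂
        · exact h1
      have := ih ((Walk.cons_isPath_iff _ _).1 hq).1 hq' hdownstep
      exact ⟨by simp [this.1], this.2⟩

end Root

lemma getVert_one_mem_support {a b : V} (w : T.Walk a b) (h : ¬ w.Nil) :
    w.getVert 1 ∈ w.support := by
  have h1 : w.tail.support = w.support.tail := support_tail_of_not_nil w h
  have h2 : w.getVert 1 ∈ w.tail.support := start_mem_support _
  rw [h1] at h2
  exact List.mem_of_mem_tail h2

lemma first_edge_mem {a b : V} (w : T.Walk a b) (h : ¬ w.Nil) :
    s(a, w.getVert 1) ∈ w.edges := by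
  cases w with
  | nil => simp at h
  | cons h' w' => rw [getVert_cons_succ, getVert_zero]; simp

lemma exists_path_within {a b : V} (w : T.Walk a b) (hw : w.IsPath) {x y : V}
    (hx : x ∈ w.support) (hy : y ∈ w.support) :
    ∃ q : T.Walk x y, q.IsPath ∧ (∀ z ∈ q.support, z ∈ w.support) ∧
      (∀ e ∈ q.edges, e ∈ w.edges) := by
  classical
  by_cases hy' : y ∈ (w.dropUntil x hx).support
  · exact ⟨(w.dropUntil x hx).takeUntil y hy', (hw.dropUntil hx).takeUntil hy',
      fun z hz => support_dropUntil_subset w hx (support_takeUntil_subset _ hy' hz),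
      fun e he => edges_dropUntil_subset w hx (edges_takeUntil_subset _ hy' he)⟩
  · have hy2 : y ∈ (w.takeUntil x hx).support := by
      have hsp : ((w.takeUntil x hx).append (w.dropUntil x hx)).support
          = (w.takeUntil x hx).support ++ (w.dropUntil x hx).support.tail :=
        support_append _ _
      rw [w.take_spec hx] at hsp
      rw [hsp] at hy
      rcases List.mem_append.1 hy with h1 | h1
      · exact h1
      · exact absurd (List.mem_of_mem_tail h1) hy'
    refine ⟨((w.takeUntil x hx).dropUntil y hy2).reverse,
      ((hw.takeUntil hx).dropUntil hy2).reverse, fun z hz => ?_, fun e he => ?_⟩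
    · rw [support_reverse, List.mem_reverse] at hz
      exact support_takeUntil_subset w hx (support_dropUntil_subset _ hy2 hz)
    · rw [edges_reverse, List.mem_reverse] at he
      exact edges_takeUntil_subset w hx (edges_dropUntil_subset _ hy2 he)

lemma pN_head {a b : V} (w : T.Walk a b) (hw : w.IsPath) {y : V}
    (hy : s(a, y) ∈ w.edges) : y = w.getVert 1 := by
  induction w with
  | nil => simp at hy
  | @cons u v b h w' ih =>
    rw [edges_cons] at hy
    rcases List.mem_cons.1 hy with h1 | h1
    · rw [Sym2.eq_iff] at h1
      rcases h1 with ⟨-, rfl⟩ | ⟨rfl, rfl⟩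
      · rw [getVert_cons_succ, getVert_zero]
      · exact absurd rfl h.ne
    · exfalso
      exact ((Walk.cons_isPath_iff _ _).1 hw).2 (fst_mem_support_of_mem_edges w' h1)

lemma pN_three {a b : V} (w : T.Walk a b) (hw : w.IsPath) {x c₁ c₂ c₃ : V}
    (h1 : s(x, c₁) ∈ w.edges) (h2 : s(x, c₂) ∈ w.edges) (h3 : s(x, c₃) ∈ w.edges)
    (d12 : c₁ ≠ c₂) (d13 : c₁ ≠ c₃) (d23 : c₂ ≠ c₃) : False := by
  induction w with
  | nil => simp at h1
  | @cons u v b h w' ih =>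
    rw [edges_cons] at h1 h2 h3
    by_cases hxu : x = u
    · subst hxu
      have e1 := pN_head _ hw h1
      have e2 := pN_head _ hw h2
      exact d12 (e1.trans e2.symm)
    · have key : ∀ c : V, s(x, c) = s(u, v) ∨ s(x, c) ∈ w'.edges →
          (x = v ∧ c = u) ∨ s(x, c) ∈ w'.edges := by
        intro c hc
        rcases hc with hc | hc
        · rw [Sym2.eq_iff] at hc
          rcases hc with ⟨rfl, rfl⟩ | ⟨rfl, rfl⟩
          · exact absurd rfl hxu
          · exact Or.inl ⟨rfl, rfl⟩
        · exact Or.inr hc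
      have hw' := ((Walk.cons_isPath_iff _ _).1 hw).1
      rcases key c₁ (by simpa using h1) with ⟨rfl, rfl⟩ | k1
      · -- x = v, c₁ = u
        rcases key c₂ (by simpa using h2) with ⟨-, rfl⟩ | k2
        · exact d12 rfl
        · rcases key c₃ (by simpa using h3) with ⟨-, rfl⟩ | k3
          · exact d13 rfl
          · have e2 := pN_head _ hw' k2
            have e3 := pN_head _ hw' k3
            exact d23 (e2.trans e3.symm)
      · rcases key c₂ (by simpa using h2) with ⟨rfl, rfl⟩ | k2
        · rcases key c₃ (by simpa using h3) with ⟨-, rfl⟩ | k3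
          · exact d23 rfl
          · have e1 := pN_head _ hw' k1
            have e3 := pN_head _ hw' k3
            exact d13 (e1.trans e3.symm)
        · rcases key c₃ (by simpa using h3) with ⟨rfl, rfl⟩ | k3
          · have e1 := pN_head _ hw' k1
            have e2 := pN_head _ hw' k2
            exact d12 (e1.trans e2.symm)
          · exact ih hw' k1 k2 k3

lemma pN_mem_pair {a b : V} (w : T.Walk a b) (hw : w.IsPath) {x c₁ c₂ y : V}
    (h1 : s(x, c₁) ∈ w.edges) (h2 : s(x, c₂) ∈ w.edges) (hne : c₁ ≠ c₂)
    (hy : s(x, y) ∈ w.edges) : y = c₁ ∨ y = c₂ := by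
  by_contra hcon
  push_neg at hcon
  exact pN_three w hw h1 h2 hy hne (Ne.symm hcon.1) (Ne.symm hcon.2)

lemma pN_nonempty {a b : V} (w : T.Walk a b) (hw : w.IsPath) {x : V}
    (hx : x ∈ w.support) (hnn : ¬ w.Nil) : ∃ y, s(x, y) ∈ w.edges := by
  induction w with
  | nil => simp at hnn
  | @cons u v b h w' ih =>
    rcases List.mem_cons.1 (by simpa using hx) with rfl | hx'
    · exact ⟨v, by simp⟩
    · by_cases hw'n : w'.Nil
      · have : x = v := by
          have := nil_iff_support_eq.1 hw'n
          rw [this] at hx'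
          simpa using hx'
        subst this
        exact ⟨u, by rw [edges_cons]; exact List.mem_cons.2 (Or.inl (Sym2.eq_swap))⟩
      · obtain ⟨y, hy⟩ := ih ((Walk.cons_isPath_iff _ _).1 hw).1 hx' hw'n
        exact ⟨y, by rw [edges_cons]; exact List.mem_cons.2 (Or.inr hy)⟩

lemma pN_two_of_mid {a b : V} (w : T.Walk a b) (hw : w.IsPath) {x : V}
    (hx : x ∈ w.support) (hxa : x ≠ a) (hxb : x ≠ b) :
    ∃ y z, y ≠ z ∧ s(x, y) ∈ w.edges ∧ s(x, z) ∈ w.edges := by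
  induction w with
  | nil => exact absurd (by simpa using hx) hxa
  | @cons u v b h w' ih =>
    have hx' : x ∈ w'.support := by
      rcases List.mem_cons.1 (by simpa using hx) with rfl | hx'
      · exact absurd rfl hxa
      · exact hx'
    have hw' := ((Walk.cons_isPath_iff _ _).1 hw).1
    by_cases hxv : x = v
    · subst hxv
      have hw'n : ¬ w'.Nil := by
        intro hn
        exact hxb hn.eq
      refine ⟨u, w'.getVert 1, ?_, ?_, ?_⟩
      · intro hc
        apply ((Walk.cons_isPath_iff _ _).1 hw).2
        rw [hc]
        exact getVert_one_mem_support w' hw'n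
      · rw [edges_cons]; exact List.mem_cons.2 (Or.inl Sym2.eq_swap)
      · rw [edges_cons]; exact List.mem_cons.2 (Or.inr (first_edge_mem w' hw'n))
    · obtain ⟨y, z, hyz, hy, hz⟩ := ih hw' hx' hxv hxb
      exact ⟨y, z, hyz, by rw [edges_cons]; exact List.mem_cons.2 (Or.inr hy),
        by rw [edges_cons]; exact List.mem_cons.2 (Or.inr hz)⟩

lemma edge_of_adj_mem (hT : T.IsTree) {a b : V} (w : T.Walk a b) (hw : w.IsPath)
    {x y : V} (hx : x ∈ w.support) (hy : y ∈ w.support) (hadj : T.Adj x y) :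
    s(x, y) ∈ w.edges := by
  obtain ⟨q, hq, _, hedges⟩ := exists_path_within w hw hx hy
  have hsingle : (Walk.cons hadj (Walk.nil : T.Walk y y)).IsPath := by simp [hadj.ne]
  have : q = Walk.cons hadj Walk.nil := (hT.existsUnique_path x y).unique hq hsingle
  apply hedges
  rw [this]
  simp

section Top
variable (hT : T.IsTree) (r : V)

def IsTop (p : Set V) (t : V) : Prop := t ∈ p ∧ (t = r ∨ par hT r t ∉ p)

lemma isTop_exists (p : Set V) (hfin : p.Finite) (hne : p.Nonempty) :
    ∃ t, IsTop hT r p t := by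
  obtain ⟨t, htp, hmin⟩ := Set.exists_min_image p (dep hT r) hfin hne
  refine ⟨t, htp, ?_⟩
  by_cases htr : t = r
  · exact Or.inl htr
  · right
    intro hpar
    have h1 := dep_par hT r htr
    have h2 := hmin _ hpar
    omega

lemma isTop_unique {a b : V} (w : T.Walk a b) (hw : w.IsPath) {p : Set V}
    (hsupp : ∀ z, z ∈ w.support ↔ z ∈ p) {t t' : V}
    (h1 : IsTop hT r p t) (h2 : IsTop hT r p t') : t = t' := by
  have aux : ∀ t t' : V, IsTop hT r p t → IsTop hT r p t' → t ≠ t' → t' ≠ r → False := by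
    intro t t' h1 h2 hne ht'r
    obtain ⟨q, hq, hsupq, -⟩ := exists_path_within w hw ((hsupp t).2 h1.1) ((hsupp t').2 h2.1)
    have hnnq : ¬ q.Nil := not_nil_of_ne hne
    have hadj1 : T.Adj t (q.getVert 1) := adj_snd hnnq
    have hx₁p : q.getVert 1 ∈ p := (hsupp _).1 (hsupq _ (getVert_one_mem_support q hnnq))
    rcases dichotomy hT r hadj1 with hc | hc
    · rcases h1.2 with rfl | hnp
      · rw [par_r] at hc
        rw [hc] at hadj1
        exact hadj1.ne rfl
      · rw [← hc] at hnp
        exact hnp hx₁p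
    · obtain ⟨hmem, -⟩ := down_lemma hT r q hq hnnq hc
      rcases h2.2 with rfl | hnp
      · exact ht'r rfl
      · exact hnp ((hsupp _).1 (hsupq _ hmem))
  by_contra hne
  by_cases ht' : t' = r
  · subst ht'
    exact aux t' t h2 h1 (Ne.symm hne) (fun hc => hne (hc ▸ rfl))
  · exact aux t t' h1 h2 hne ht'

end Top

section Cover
variable [Fintype V]

def SamePart (P : Set (Set V)) (x y : V) : Prop := ∃ p ∈ P, x ∈ p ∧ y ∈ p

def Config (T : SimpleGraph V) (P : Set (Set V)) : Prop :=
  ∃ v u : V, T.Adj v u ∧ ¬ SamePart P v u ∧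
    (∀ y₁ y₂, T.Adj v y₁ → T.Adj v y₂ → SamePart P v y₁ → SamePart P v y₂ → y₁ = y₂)

lemma part_mem_exists {P : Set (Set V)} (hP : T.IsPathCover P) (x : V) :
    ∃ p ∈ P, x ∈ p := Set.mem_sUnion.1 (hP.2.2 ▸ Set.mem_univ x)

lemma part_eq {P : Set (Set V)} (hP : T.IsPathCover P) {p q : Set V}
    (hp : p ∈ P) (hq : q ∈ P) {x : V} (hxp : x ∈ p) (hxq : x ∈ q) : p = q := by
  by_contra hne
  exact Set.disjoint_left.1 (hP.2.1 hp hq hne) hxp hxq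

lemma exists_adj (hT : T.IsTree) (hn : 2 ≤ Fintype.card V) (x : V) : ∃ y, T.Adj x y := by
  have : Nontrivial V := Fintype.one_lt_card_iff_nontrivial.1 hn
  obtain ⟨y, hy⟩ := exists_ne x
  obtain ⟨w⟩ := hT.isConnected.preconnected x y
  exact ⟨w.getVert 1, adj_snd (not_nil_of_ne (Ne.symm hy))⟩

lemma ncard_biUnion_pair_le {α : Type*} (A : Set α) (hA : A.Finite) (f g : α → V) :
    (⋃ a ∈ A, ({f a, g a} : Set V)).ncard ≤ 2 * A.ncard := by
  apply Set.Finite.induction_on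
      (motive := fun A _ => (⋃ a ∈ A, ({f a, g a} : Set V)).ncard ≤ 2 * A.ncard) A hA
  · simp
  · intro a A' ha hA' ih
    have : (⋃ x ∈ insert a A', ({f x, g x} : Set V)) =
        ({f a, g a} : Set V) ∪ ⋃ x ∈ A', ({f x, g x} : Set V) := by
      simp [Set.biUnion_insert]
    rw [this, Set.ncard_insert_of_notMem ha hA']
    calc (({f a, g a} : Set V) ∪ ⋃ x ∈ A', ({f x, g x} : Set V)).ncard
        ≤ ({f a, g a} : Set V).ncard + (⋃ x ∈ A', ({f x, g x} : Set V)).ncard :=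
          Set.ncard_union_le _ _
      _ ≤ 2 + 2 * A'.ncard := by
          have h1 : ({f a, g a} : Set V).ncard ≤ 2 := by
            apply le_trans (Set.ncard_insert_le _ _)
            simp
          omega
      _ = 2 * (A'.ncard + 1) := by ring

theorem no_config (hT : T.IsTree) (hn : 2 ≤ Fintype.card V)
    (hft : T.totalForcingNumber = 2 * T.pathCoverNumber)
    {P : Set (Set V)} (hP : T.IsPathCover P) (hPc : P.ncard = T.pathCoverNumber)
    (hcfg : Config T P) : False := by
  classical
  obtain ⟨v, u, hadjvu, hcross, hvnon⟩ := hcfg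
  obtain ⟨Q, hQP, hvQ⟩ := part_mem_exists hP v
  obtain ⟨R, hRP, huR⟩ := part_mem_exists hP u
  have hQR : Q ≠ R := by
    rintro rfl
    exact hcross ⟨Q, hQP, hvQ, huR⟩
  have hNE : Nonempty V := ⟨v⟩
  -- choice of tops
  have htopex : ∀ p : Set V, p ∈ P → ∃ t, IsTop hT v p t := by
    intro p hp
    obtain ⟨a, b, w, hw, hsupp⟩ := hP.1 p hp
    have : a ∈ p := by rw [← hsupp]; exact start_mem_support w
    exact isTop_exists hT v p p.toFinite ⟨a, this⟩
  choose! topf htopf using htopex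
  have hextex : ∀ p : Set V, p ∈ P → ∃ e, T.Adj (topf p) e ∧
      ((∃ y ∈ p, T.Adj (topf p) y) → e ∈ p) := by
    intro p hp
    by_cases hy : ∃ y ∈ p, T.Adj (topf p) y
    · obtain ⟨y, hyp, hady⟩ := hy
      exact ⟨y, hady, fun _ => hyp⟩
    · obtain ⟨e, he⟩ := exists_adj hT hn (topf p)
      exact ⟨e, he, fun hc => absurd hc hy⟩
  choose! extf hextf using hextex
  set S : Set V := insert v (⋃ p ∈ P \ {Q}, ({topf p, extf p} : Set V)) with hS
  have hSmem : ∀ p, p ∈ P → p ≠ Q → topf p ∈ S ∧ extf p ∈ S := by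
    intro p hp hpQ
    constructor <;>
    · apply Set.mem_insert_of_mem
      refine Set.mem_biUnion ⟨hp, hpQ⟩ ?_
      simp
  have hvS : v ∈ S := Set.mem_insert _ _
  -- the forcing
  have hforce : ∀ n, ∀ x : V, dep hT v x ≤ n → T.Forced S x := by
    intro n
    induction n with
    | zero =>
      intro x hx
      have : x = v := eq_r_of_dep_eq_zero hT v (Nat.le_zero.1 hx)
      subst this
      exact .init _ hvS
    | succ n IH =>
      intro x hdep
      by_cases hxS : x ∈ S
      · exact .init _ hxS
      have hxr : x ≠ v := by rintro rfl; exact hxS hvS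
      obtain ⟨p, hpP, hxp⟩ := part_mem_exists hP x
      obtain ⟨a, b, w, hw, hsupp⟩ := hP.1 p hpP
      have hsupp' : ∀ z, z ∈ w.support ↔ z ∈ p := by
        intro z
        rw [← hsupp]
        rfl
      have hnotop : ¬ IsTop hT v p x := by
        intro htop
        by_cases hpQ : p = Q
        · subst hpQ
          have hvtop : IsTop hT v p v := ⟨hvQ, Or.inl rfl⟩
          exact hxr (isTop_unique hT v w hw hsupp' htop hvtop)
        · exact hxS ((isTop_unique hT v w hw hsupp' htop (htopf p hpP)) ▸
            (hSmem p hpP hpQ).1)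
      have hparp : par hT v x ∈ p := by
        by_contra hc
        exact hnotop ⟨hxp, Or.inr hc⟩
      have hady : T.Adj x (par hT v x) := adj_par hT v hxr
      have hdepz : dep hT v (par hT v x) + 1 = dep hT v x := dep_par hT v hxr
      refine SimpleGraph.Forced.force (par hT v x) x (IH _ (by omega)) hady.symm ?_
      intro y hyadj hyx
      rcases dichotomy hT v hyadj with hpz | hpy
      · -- y = par (par x) : going up
        have hzr : par hT v x ≠ v := by
          intro hc
          rw [hc, par_r] at hpz
          exact hyadj.ne (by rw [hc, hpz])
        have : dep hT v y + 1 = dep hT v (par hT v x) := by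
          rw [hpz]; exact dep_par hT v hzr
        exact IH y (by omega)
      · -- par x = par y : y is a child of z := par x
        by_cases hyp : y ∈ p
        · have hex : s(par hT v x, x) ∈ w.edges :=
            edge_of_adj_mem hT w hw ((hsupp' _).2 hparp) ((hsupp' x).2 hxp) hady.symm
          have hey : s(par hT v x, y) ∈ w.edges :=
            edge_of_adj_mem hT w hw ((hsupp' _).2 hparp) ((hsupp' y).2 hyp) hyadj
          have hxyne : x ≠ y := Ne.symm hyx
          have hdepx : dep hT v x = dep hT v (par hT v x) + 1 := by omega
          have hdepy : dep hT v y = dep hT v (par hT v x) + 1 :=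
            dep_child hT v hyadj hpy
          have hztop : IsTop hT v p (par hT v x) := by
            refine ⟨hparp, ?_⟩
            by_cases hzr : par hT v x = v
            · exact Or.inl hzr
            right
            intro hparz
            have hepz : s(par hT v x, par hT v (par hT v x)) ∈ w.edges :=
              edge_of_adj_mem hT w hw ((hsupp' _).2 hparp) ((hsupp' _).2 hparz)
                (adj_par hT v hzr)
            have hdd := dep_par hT v hzr
            have d1 : x ≠ par hT v (par hT v x) := by
              intro hc; rw [← hc] at hdd; omega
            have d2 : y ≠ par hT v (par hT v x) := by
              intro hc; rw [← hc] at hdd; omega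
            exact pN_three w hw hex hey hepz hxyne d1 d2
          by_cases hpQ : p = Q
          · exfalso
            subst hpQ
            have hvtop : IsTop hT v p v := ⟨hvQ, Or.inl rfl⟩
            have hzv : par hT v x = v := isTop_unique hT v w hw hsupp' hztop hvtop
            apply hxyne
            apply hvnon x y (hzv ▸ hady.symm) (hzv ▸ hyadj)
            · exact ⟨p, hpP, hzv ▸ hparp, hxp⟩
            · exact ⟨p, hpP, hzv ▸ hparp, hyp⟩
          · have hzt : par hT v x = topf p := isTop_unique hT v w hw hsupp' hztop (htopf p hpP)
            have hin : extf p ∈ p := (hextf p hpP).2 ⟨x, hxp, hzt ▸ hady.symm⟩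
            have hadje : T.Adj (par hT v x) (extf p) := hzt ▸ (hextf p hpP).1
            have hee : s(par hT v x, extf p) ∈ w.edges :=
              edge_of_adj_mem hT w hw ((hsupp' _).2 hparp) ((hsupp' _).2 hin) hadje
            rcases pN_mem_pair w hw hex hey hxyne hee with h1 | h1
            · exact absurd (h1 ▸ (hSmem p hpP hpQ).2) hxS
            · exact .init _ (h1 ▸ (hSmem p hpP hpQ).2)
        · -- y in another part : y is the top there
          obtain ⟨p', hp'P, hyp'⟩ := part_mem_exists hP y
          have hpp' : p' ≠ p := by rintro rfl; exact hyp hyp'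
          obtain ⟨a2, b2, w2, hw2, hsupp2⟩ := hP.1 p' hp'P
          have hsupp2' : ∀ z, z ∈ w2.support ↔ z ∈ p' := by
            intro z; rw [← hsupp2]; rfl
          have hytop : IsTop hT v p' y := by
            refine ⟨hyp', Or.inr ?_⟩
            rw [← hpy]
            intro hc
            exact hpp' (part_eq hP hp'P hpP hc hparp)
          by_cases hp'Q : p' = Q
          · exfalso
            subst hp'Q
            have hvtop : IsTop hT v p' v := ⟨hvQ, Or.inl rfl⟩
            exact (ne_r_of_par hT v hyadj hpy)
              (isTop_unique hT v w2 hw2 hsupp2' hytop hvtop)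
          · exact .init _ ((isTop_unique hT v w2 hw2 hsupp2' hytop (htopf p' hp'P)) ▸
              (hSmem p' hp'P hp'Q).1)
  have hZF : T.IsZeroForcingSet S := by
    intro x
    have hF := hforce (dep hT v x) x le_rfl
    -- convert our local Forced to the real one
    clear hforce
    induction hF with
    | init z hz => exact SimpleGraph.Forced.init z hz
    | force z x' hz hadj huniq ih1 ih2 => exact SimpleGraph.Forced.force z x' ih1 hadj ih2
  -- u is the top of R
  have hvparu : v = par hT v u := by
    rcases dichotomy hT v hadjvu with hc | hc
    · rw [par_r] at hc
      exact absurd hc.symm hadjvu.ne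
    · exact hc
  have hvnotR : v ∉ R := fun hc => hcross ⟨R, hRP, hc, huR⟩
  have hutop : IsTop hT v R u := ⟨huR, Or.inr (by rw [← hvparu]; exact hvnotR)⟩
  obtain ⟨aR, bR, wR, hwR, hsuppR⟩ := hP.1 R hRP
  have hsuppR' : ∀ z, z ∈ wR.support ↔ z ∈ R := fun z => by rw [← hsuppR]; rfl
  have hueq : u = topf R := isTop_unique hT v wR hwR hsuppR' hutop (htopf R hRP)
  have hRQ : R ≠ Q := Ne.symm hQR
  have huS : u ∈ S := hueq ▸ (hSmem R hRP hRQ).1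
  -- totality
  have htot : ∀ s ∈ S, ∃ t ∈ S, T.Adj s t := by
    intro s hs
    rcases Set.mem_insert_iff.1 hs with rfl | hs2
    · exact ⟨u, huS, hadjvu⟩
    · simp only [Set.mem_iUnion] at hs2
      obtain ⟨p, hpmem, hsp⟩ := hs2
      have hpP : p ∈ P := hpmem.1
      have hpQ : p ≠ Q := by
        intro hc
        exact hpmem.2 (by simp [hc])
      rcases Set.mem_insert_iff.1 hsp with rfl | hsp2
      · exact ⟨extf p, (hSmem p hpP hpQ).2, (hextf p hpP).1⟩
      · rw [Set.mem_singleton_iff] at hsp2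
        subst hsp2
        exact ⟨topf p, (hSmem p hpP hpQ).1, ((hextf p hpP).1).symm⟩
  -- size bound
  have hfinP : P.Finite := Set.toFinite P
  have hQdiff : (P \ {Q}).ncard = P.ncard - 1 := Set.ncard_diff_singleton_of_mem hQP
  have h1 := Set.ncard_insert_le v (⋃ p ∈ P \ {Q}, ({topf p, extf p} : Set V))
  have h2 := ncard_biUnion_pair_le (P \ {Q}) hfinP.diff topf extf
  have hP1 : 1 ≤ P.ncard := (Set.ncard_pos hfinP).2 ⟨Q, hQP⟩
  have hSle : S.ncard ≤ 2 * P.ncard - 1 := by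
    rw [hS]
    omega
  have hle : T.totalForcingNumber ≤ S.ncard := Nat.sInf_le ⟨S, ⟨hZF, htot⟩, rfl⟩
  rw [hft, ← hPc] at hle
  omega

lemma samePart_comm {P : Set (Set V)} {x y : V} : SamePart P x y ↔ SamePart P y x := by
  constructor <;> rintro ⟨p, hp, h1, h2⟩ <;> exact ⟨p, hp, h2, h1⟩

lemma min_cover_exists (hnV : Nonempty V) :
    ∃ P : Set (Set V), T.IsPathCover P ∧ P.ncard = T.pathCoverNumber := by
  have hcov : T.IsPathCover ((fun v => ({v} : Set V)) '' Set.univ) := by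
    refine ⟨?_, ?_, ?_⟩
    · rintro q ⟨v, -, rfl⟩
      exact ⟨v, v, Walk.nil, Walk.IsPath.nil, by ext x; simp [Walk.support_nil]⟩
    · rintro p ⟨a, -, rfl⟩ q ⟨b, -, rfl⟩ hne
      have hab : a ≠ b := fun hc => hne (by rw [hc])
      exact Set.disjoint_singleton.2 hab
    · ext x
      simp only [Set.mem_sUnion, Set.mem_univ, iff_true]
      exact ⟨{x}, ⟨x, trivial, rfl⟩, rfl⟩
  have hne : {n | ∃ P : Set (Set V), T.IsPathCover P ∧ P.ncard = n}.Nonempty :=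
    ⟨_, _, hcov, rfl⟩
  obtain ⟨P, h1, h2⟩ := Nat.sInf_mem hne
  exact ⟨P, h1, h2⟩

lemma walk_support_in_part {P' : Set (Set V)} (hP' : T.IsPathCover P') {p' : Set V}
    (hp' : p' ∈ P') : ∀ {c d : V} (q : T.Walk c d), c ∈ p' →
    (∀ x y : V, s(x, y) ∈ q.edges → SamePart P' x y) → ∀ z ∈ q.support, z ∈ p' := by
  intro c d q
  induction q with
  | nil =>
    intro hc _ z hz
    simp only [Walk.support_nil, List.mem_singleton] at hz
    subst hz; exact hc
  | @cons c c₂ d h q' ih =>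
    intro hc hall z hz
    have hsp : SamePart P' c c₂ := hall c c₂ (by simp)
    obtain ⟨p'', hp'', h1, h2⟩ := hsp
    have : p'' = p' := part_eq hP' hp'' hp' h1 hc
    subst this
    rcases List.mem_cons.1 (by simpa using hz) with rfl | hz'
    · exact hc
    · exact ih h2 (fun x y he => hall x y (by rw [Walk.edges_cons]; exact List.mem_cons_of_mem _ he)) z hz'

lemma cover_subset_of_samepart {P P' : Set (Set V)} (hP : T.IsPathCover P)
    (hP' : T.IsPathCover P')
    (hiff : ∀ x y, T.Adj x y → (SamePart P x y ↔ SamePart P' x y)) : P ⊆ P' := by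
  intro p hp
  obtain ⟨a, b, w, hw, hsupp⟩ := hP.1 p hp
  have hsupp' : ∀ z, z ∈ w.support ↔ z ∈ p := fun z => by rw [← hsupp]; rfl
  have hap : a ∈ p := (hsupp' a).1 (Walk.start_mem_support w)
  obtain ⟨p', hp'P, hap'⟩ := part_mem_exists hP' a
  suffices hps : p = p' by rw [hps]; exact hp'P
  apply Set.Subset.antisymm
  · -- p ⊆ p'
    intro z hz
    refine walk_support_in_part hP' hp'P w hap' ?_ z ((hsupp' z).2 hz)
    intro x y he
    have hadj := w.adj_of_mem_edges he
    refine (hiff x y hadj).1 ⟨p, hp, ?_, ?_⟩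
    · exact (hsupp' x).1 (w.fst_mem_support_of_mem_edges he)
    · exact (hsupp' y).1 (w.snd_mem_support_of_mem_edges he)
  · -- p' ⊆ p
    obtain ⟨a2, b2, w2, hw2, hsupp2⟩ := hP'.1 p' hp'P
    have hsupp2' : ∀ z, z ∈ w2.support ↔ z ∈ p' := fun z => by rw [← hsupp2]; rfl
    have ha2p' : a2 ∈ p' := (hsupp2' a2).1 (Walk.start_mem_support w2)
    obtain ⟨p'', hp''P, ha2⟩ := part_mem_exists hP a2
    have hall : ∀ z ∈ w2.support, z ∈ p'' := by
      refine walk_support_in_part hP hp''P w2 ha2 ?_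
      intro x y he
      have hadj := w2.adj_of_mem_edges he
      refine (hiff x y hadj).2 ⟨p', hp'P, ?_, ?_⟩
      · exact (hsupp2' x).1 (w2.fst_mem_support_of_mem_edges he)
      · exact (hsupp2' y).1 (w2.snd_mem_support_of_mem_edges he)
    have hpp'' : p'' = p := part_eq hP hp''P hp (hall a ((hsupp2' a).2 hap')) hap
    intro z hz
    rw [← hpp'']
    exact hall z ((hsupp2' z).2 hz)

theorem min_cover_unique (hT : T.IsTree) (hn : 2 ≤ Fintype.card V)
    (hft : T.totalForcingNumber = 2 * T.pathCoverNumber)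
    {P P' : Set (Set V)} (hP : T.IsPathCover P) (hPc : P.ncard = T.pathCoverNumber)
    (hP' : T.IsPathCover P') (hPc' : P'.ncard = T.pathCoverNumber) : P = P' := by
  classical
  by_contra hne
  have hNEV : Nonempty V := Fintype.card_pos_iff.1 (by omega)
  obtain ⟨r⟩ := hNEV
  have hint : ∀ (Pc : Set (Set V)), T.IsPathCover Pc → Pc.ncard = T.pathCoverNumber →
      ∀ x y : V, T.Adj x y → ¬ SamePart Pc x y →
      ∃ c₁ c₂, c₁ ≠ c₂ ∧ T.Adj x c₁ ∧ T.Adj x c₂ ∧ SamePart Pc x c₁ ∧ SamePart Pc x c₂ := by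
    intro Pc h1 h2 x y hadj hnsp
    by_contra hc
    push_neg at hc
    apply no_config hT hn hft h1 h2
    refine ⟨x, y, hadj, hnsp, ?_⟩
    intro y₁ y₂ ha1 ha2 hs1 hs2
    by_contra hne12
    exact (hc y₁ y₂ hne12 ha1 ha2 hs1) hs2
  have hD : ∃ x y : V, T.Adj x y ∧ ¬ (SamePart P x y ↔ SamePart P' x y) := by
    by_contra hc
    push_neg at hc
    apply hne
    apply Set.Subset.antisymm
    · exact cover_subset_of_samepart hP hP' hc
    · exact cover_subset_of_samepart hP' hP (fun x y h => (hc x y h).symm)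
  set D : Set V := {x : V | ∃ z : V, T.Adj x z ∧ z = par hT r x ∧
      ¬ (SamePart P x z ↔ SamePart P' x z)} with hDdef
  have hDne : D.Nonempty := by
    obtain ⟨x, y, hadj, hniff⟩ := hD
    rcases dichotomy hT r hadj with hc | hc
    · exact ⟨x, y, hadj, hc, hniff⟩
    · refine ⟨y, x, hadj.symm, hc, ?_⟩
      intro hciff
      apply hniff
      rw [samePart_comm (P := P), samePart_comm (P := P')]
      exact hciff
  obtain ⟨x, hxD, hmax⟩ := Set.exists_max_image D (dep hT r) D.toFinite hDne
  obtain ⟨z, hadjxz, hzpar, hniff⟩ := hxD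
  have aux : ∀ (P₁ P₂ : Set (Set V)), T.IsPathCover P₁ → P₁.ncard = T.pathCoverNumber →
      T.IsPathCover P₂ →
      (∀ c : V, T.Adj x c → x = par hT r c → SamePart P₁ x c → ¬ SamePart P₂ x c → c ∈ D) →
      SamePart P₂ x z → ¬ SamePart P₁ x z → False := by
    intro P₁ P₂ h1 h1c h2 hmem hsp2 hnsp1
    obtain ⟨c₁, c₂, hne12, ha1, ha2, hs1, hs2⟩ := hint P₁ h1 h1c x z hadjxz hnsp1
    have hchild : ∀ c : V, T.Adj x c → SamePart P₁ x c → x = par hT r c := by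
      intro c hadj hsp
      rcases dichotomy hT r hadj with hc | hc
      · exfalso
        rw [hc, ← hzpar] at hsp
        exact hnsp1 hsp
      · exact hc
    have hz1 : c₁ ≠ z := fun hc => hnsp1 (hc ▸ hs1)
    have hz2 : c₂ ≠ z := fun hc => hnsp1 (hc ▸ hs2)
    obtain ⟨q, hqP2, hxq, hzq⟩ := hsp2
    obtain ⟨a2, b2, w2, hw2, hsupp2⟩ := h2.1 q hqP2
    have hsupp2' : ∀ t, t ∈ w2.support ↔ t ∈ q := fun t => by rw [← hsupp2]; rfl
    have hez : s(x, z) ∈ w2.edges :=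
      edge_of_adj_mem hT w2 hw2 ((hsupp2' x).2 hxq) ((hsupp2' z).2 hzq) hadjxz
    have hnot : ¬ (SamePart P₂ x c₁ ∧ SamePart P₂ x c₂) := by
      rintro ⟨hq1, hq2⟩
      obtain ⟨q1, hq1P, hxq1, hcq1⟩ := hq1
      obtain ⟨q2, hq2P, hxq2, hcq2⟩ := hq2
      have e1 : q1 = q := part_eq h2 hq1P hqP2 hxq1 hxq
      have e2 : q2 = q := part_eq h2 hq2P hqP2 hxq2 hxq
      subst e1; subst e2
      have he1 : s(x, c₁) ∈ w2.edges :=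
        edge_of_adj_mem hT w2 hw2 ((hsupp2' x).2 hxq) ((hsupp2' c₁).2 hcq1) ha1
      have he2 : s(x, c₂) ∈ w2.edges :=
        edge_of_adj_mem hT w2 hw2 ((hsupp2' x).2 hxq) ((hsupp2' c₂).2 hcq2) ha2
      exact pN_three w2 hw2 he1 he2 hez hne12 hz1 hz2
    have hdone : ∀ c : V, T.Adj x c → SamePart P₁ x c → ¬ SamePart P₂ x c → False := by
      intro c hadj hsp hnsp
      have hcD : c ∈ D := hmem c hadj (hchild c hadj hsp) hsp hnsp
      have hle := hmax c hcD
      have heq := dep_child hT r hadj (hchild c hadj hsp)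
      omega
    rcases not_and_or.1 hnot with hh | hh
    · exact hdone c₁ ha1 hs1 hh
    · exact hdone c₂ ha2 hs2 hh
  rcases Classical.em (SamePart P x z) with hsp | hnsp
  · have hnsp' : ¬ SamePart P' x z := fun hc => hniff (iff_of_true hsp hc)
    refine aux P' P hP' hPc' hP ?_ hsp hnsp'
    intro c hadj hpar hs1 hns2
    refine ⟨x, hadj.symm, hpar, ?_⟩
    intro hciff
    rw [samePart_comm (P := P), samePart_comm (P := P')] at hciff
    exact hns2 (hciff.2 hs1)
  · have hsp' : SamePart P' x z := by
      by_contra hc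
      exact hniff (iff_of_false hnsp hc)
    refine aux P P' hP hPc hP' ?_ hsp' hnsp
    intro c hadj hpar hs1 hns2
    refine ⟨x, hadj.symm, hpar, ?_⟩
    intro hciff
    rw [samePart_comm (P := P), samePart_comm (P := P')] at hciff
    exact hns2 (hciff.1 hs1)


theorem leaf_structure (hT : T.IsTree) (hn : 2 ≤ Fintype.card V)
    (hft : T.totalForcingNumber = 2 * T.pathCoverNumber)
    {P : Set (Set V)} (hP : T.IsPathCover P) (hPc : P.ncard = T.pathCoverNumber)
    {p : Set V} (hp : p ∈ P) :
    ∃ (a b : V) (w : T.Walk a b), w.IsPath ∧ {x | x ∈ w.support} = p ∧ a ≠ b ∧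
      T.IsLeaf a ∧ T.IsLeaf b := by
  classical
  obtain ⟨a, b, w, hw, hsupp⟩ := hP.1 p hp
  have hnoncross : ∀ x : V, x ∈ p →
      (∀ y₁ y₂ : V, T.Adj x y₁ → T.Adj x y₂ → SamePart P x y₁ → SamePart P x y₂ → y₁ = y₂) →
      ∀ y, T.Adj x y → y ∈ p := by
    intro x hxp hnon y hady
    by_contra hyp
    apply no_config hT hn hft hP hPc
    refine ⟨x, y, hady, ?_, hnon⟩
    rintro ⟨q, hqP, hxq, hyq⟩
    have : q = p := part_eq hP hqP hp hxq hxp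
    exact hyp (this ▸ hyq)
  have hleafhead : ∀ (a b : V) (w : T.Walk a b), w.IsPath → ({x | x ∈ w.support} = p) →
      ¬ w.Nil → T.IsLeaf a := by
    intro a b w hw hsupp hnn
    have hsupp' : ∀ z, z ∈ w.support ↔ z ∈ p := fun z => by rw [← hsupp]; rfl
    have hap : a ∈ p := (hsupp' a).1 w.start_mem_support
    have hnon : ∀ y₁ y₂ : V, T.Adj a y₁ → T.Adj a y₂ → SamePart P a y₁ →
        SamePart P a y₂ → y₁ = y₂ := by
      intro y₁ y₂ h1 h2 hs1 hs2
      obtain ⟨q1, hq1, ha1, hy1⟩ := hs1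
      obtain ⟨q2, hq2, ha2, hy2⟩ := hs2
      have e1 : q1 = p := part_eq hP hq1 hp ha1 hap
      have e2 : q2 = p := part_eq hP hq2 hp ha2 hap
      have he1 : s(a, y₁) ∈ w.edges :=
        edge_of_adj_mem hT w hw w.start_mem_support ((hsupp' y₁).2 (e1 ▸ hy1)) h1
      have he2 : s(a, y₂) ∈ w.edges :=
        edge_of_adj_mem hT w hw w.start_mem_support ((hsupp' y₂).2 (e2 ▸ hy2)) h2
      rw [pN_head w hw he1, pN_head w hw he2]
    have hsub : T.neighborSet a ⊆ {w.getVert 1} := by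
      intro y hy
      have hyp : y ∈ p := hnoncross a hap hnon y hy
      have he : s(a, y) ∈ w.edges :=
        edge_of_adj_mem hT w hw w.start_mem_support ((hsupp' y).2 hyp) hy
      exact pN_head w hw he
    have hmem : w.getVert 1 ∈ T.neighborSet a := adj_snd hnn
    have heq : T.neighborSet a = {w.getVert 1} :=
      Set.Subset.antisymm hsub (Set.singleton_subset_iff.2 hmem)
    show (T.neighborSet a).ncard = 1
    rw [heq]
    exact Set.ncard_singleton _
  have hab : a ≠ b := by
    rintro rfl
    have hwnil : w = Walk.nil := Walk.isPath_iff_eq_nil.1 hw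
    subst hwnil
    have hpa : p = {a} := by rw [← hsupp]; ext x; simp [Walk.support_nil]
    obtain ⟨y, hady⟩ := exists_adj hT hn a
    have hnon : ∀ y₁ y₂ : V, T.Adj a y₁ → T.Adj a y₂ → SamePart P a y₁ →
        SamePart P a y₂ → y₁ = y₂ := by
      intro y₁ y₂ h1 h2 hs1 hs2
      exfalso
      obtain ⟨q1, hq1, ha1, hy1⟩ := hs1
      have e1 : q1 = p := part_eq hP hq1 hp ha1 (by rw [hpa]; exact Set.mem_singleton a)
      rw [e1, hpa, Set.mem_singleton_iff] at hy1
      exact h1.ne hy1.symm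
    have hyp : y ∈ p := hnoncross a (by rw [hpa]; exact Set.mem_singleton a) hnon y hady
    rw [hpa, Set.mem_singleton_iff] at hyp
    exact hady.ne hyp.symm
  refine ⟨a, b, w, hw, hsupp, hab,
    hleafhead a b w hw hsupp (Walk.not_nil_of_ne hab), ?_⟩
  apply hleafhead b a w.reverse hw.reverse ?_ (Walk.not_nil_of_ne (Ne.symm hab))
  rw [← hsupp]
  ext x
  simp [Walk.support_reverse]

end Cover

end ZF

theorem stmt12 {V : Type*} [Fintype V] (T : SimpleGraph V) (hT : T.IsTree)
    (hn : 2 ≤ Fintype.card V)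
    (h : T.totalForcingNumber = 2 * T.pathCoverNumber) :
    ∃ P : Set (Set V), T.IsPathCover P ∧ P.ncard = T.pathCoverNumber ∧
      (∀ Q : Set (Set V), T.IsPathCover Q → Q.ncard = T.pathCoverNumber → Q = P) ∧
      ∀ p ∈ P, ∃ (a b : V) (w : T.Walk a b), w.IsPath ∧
        {x | x ∈ w.support} = p ∧ a ≠ b ∧ T.IsLeaf a ∧ T.IsLeaf b := by
  classical
  have hNEV : Nonempty V := Fintype.card_pos_iff.1 (by omega)
  obtain ⟨P, hP, hPc⟩ := ZF.min_cover_exists (T := T) hNEV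
  refine ⟨P, hP, hPc, ?_, ?_⟩
  · intro Q hQ hQc
    exact ZF.min_cover_unique hT hn h hQ hQc hP hPc
  · intro p hp
    obtain ⟨a, b, w, hw, hs, hab, hla, hlb⟩ := ZF.leaf_structure hT hn h hP hPc hp
    exact ⟨a, b, w, hw, hs, hab, hla, hlb⟩
end

section
/- For all positive integers k and ℓ with 1 ≤ k ≤ ℓ, there exists a tree T with pc(T) = ℓ and F_t(T) = k + ℓ. -/
open SimpleGraph

section General
variable {V : Type*} {G : SimpleGraph V}

/-- A vertex with a unique neighbor lying on a path must be an endpoint. -/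
lemma endpoint_of_unique_nbr {u v a b : V} (w : G.Walk u v) (hw : w.IsPath)
    (ha : a ∈ w.support) (hb : ∀ x, G.Adj a x → x = b) : a = u ∨ a = v := by
  induction w with
  | nil => simp at ha; exact Or.inl ha
  | @cons u s v h p ih =>
    rw [Walk.support_cons, List.mem_cons] at ha
    rcases ha with rfl | ha
    · exact Or.inl rfl
    · rcases ih hw.of_cons ha with rfl | h'
      · -- a = s
        cases p with
        | nil => exact Or.inr rfl
        | @cons _ t _ h2 q =>
          exfalso
          have h1 : u = b := hb u h.symm
          have h3 : t = b := hb t h2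
          have hu : u ∉ (Walk.cons h2 q).support := by
            have := hw.support_nodup
            rw [Walk.support_cons] at this
            exact (List.nodup_cons.mp this).1
          have ht : t ∈ (Walk.cons h2 q).support := by
            rw [Walk.support_cons]; exact List.mem_cons_of_mem _ q.start_mem_support
          have hut : u = t := h1.trans h3.symm
          subst hut
          exact hu ht
      · exact Or.inr h'

lemma second_vertex {u v : V} (w : G.Walk u v) (hne : u ≠ v) :
    ∃ s, G.Adj u s ∧ s ∈ w.support := by
  cases w with
  | nil => exact absurd rfl hne
  | @cons _ s _ h p =>
    exact ⟨s, h, by rw [Walk.support_cons]; exact List.mem_cons_of_mem _ p.start_mem_support⟩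

lemma cycle_no_unique_nbr {a : V} (c : G.Walk a a) (hc : c.IsCycle)
    (h : ∀ x y, G.Adj a x → G.Adj a y → x ∈ c.support → y ∈ c.support → x = y) : False := by
  cases c with
  | nil => exact Walk.IsCycle.not_of_nil hc
  | @cons _ s _ h1 p =>
    have hs : s ∈ (Walk.cons h1 p).support := by
      rw [Walk.support_cons]; exact List.mem_cons_of_mem _ p.start_mem_support
    have hsa : a ≠ s := fun hh => G.loopless.irrefl a (hh ▸ h1)
    obtain ⟨t, h2, q2, hpr⟩ := Walk.exists_eq_cons_of_ne hsa p.reverse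
    have ht : t ∈ (Walk.cons h1 p).support := by
      have : t ∈ p.reverse.support := by
        rw [hpr, Walk.support_cons]; exact List.mem_cons_of_mem _ q2.start_mem_support
      rw [Walk.support_reverse, List.mem_reverse] at this
      rw [Walk.support_cons]; exact List.mem_cons_of_mem _ this
    have hts : t = s := h t s h2 h1 ht hs
    have hedge : s(a, t) ∈ p.edges := by
      have : s(a, t) ∈ p.reverse.edges := by rw [hpr, Walk.edges_cons]; exact List.mem_cons_self
      rwa [Walk.edges_reverse, List.mem_reverse] at this
    have hnodup := hc.edges_nodup
    rw [Walk.edges_cons] at hnodup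
    rw [hts] at hedge
    exact (List.nodup_cons.mp hnodup).1 hedge
end General
open SimpleGraph

section Transfer
variable {V V' : Type*} (e : V ≃ V') (G : SimpleGraph V')

lemma forced_comap (S : Set V) (v : V) :
    (G.comap e).Forced S v ↔ G.Forced (e '' S) (e v) := by
  constructor
  · intro h
    induction h with
    | init v hv => exact Forced.init _ ⟨v, hv, rfl⟩
    | force u w hu hadj huniq ihu ihuniq =>
      refine Forced.force (e u) (e w) ihu hadj ?_
      intro x hx hne
      have h1 : (G.comap e).Adj u (e.symm x) := by
        show G.Adj (e u) (e (e.symm x)); rwa [e.apply_symm_apply]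
      have h2 : e.symm x ≠ w := fun hh => hne (by rw [← e.apply_symm_apply x, hh])
      have := ihuniq (e.symm x) h1 h2
      rwa [e.apply_symm_apply] at this
  · intro h
    have key : ∀ v', G.Forced (e '' S) v' → (G.comap e).Forced S (e.symm v') := by
      intro v' h'
      induction h' with
      | init w hw => obtain ⟨x, hx, rfl⟩ := hw; rw [e.symm_apply_apply]; exact Forced.init _ hx
      | force u w hu hadj huniq ihu ihuniq =>
        refine Forced.force (e.symm u) (e.symm w) ihu ?_ ?_
        · show G.Adj (e (e.symm u)) (e (e.symm w)); rwa [e.apply_symm_apply, e.apply_symm_apply]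
        · intro x hx hne
          have h1 : G.Adj u (e x) := by
            have : G.Adj (e (e.symm u)) (e x) := hx
            rwa [e.apply_symm_apply] at this
          have h2 : e x ≠ w := fun hh => hne (by rw [← hh, e.symm_apply_apply])
          have := ihuniq (e x) h1 h2
          rwa [e.symm_apply_apply] at this
    have := key (e v) h
    rwa [e.symm_apply_apply] at this

lemma isTotalForcingSet_comap (S : Set V) :
    (G.comap e).IsTotalForcingSet S ↔ G.IsTotalForcingSet (e '' S) := by
  constructor
  · rintro ⟨hz, ht⟩
    refine ⟨?_, ?_⟩
    · intro v'
      have := (forced_comap e G S (e.symm v')).1 (hz (e.symm v'))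
      rwa [e.apply_symm_apply] at this
    · rintro v' ⟨v, hv, rfl⟩
      obtain ⟨u, hu, hadj⟩ := ht v hv
      exact ⟨e u, ⟨u, hu, rfl⟩, hadj⟩
  · rintro ⟨hz, ht⟩
    refine ⟨?_, ?_⟩
    · intro v
      exact (forced_comap e G S v).2 (hz (e v))
    · intro v hv
      obtain ⟨u', hu', hadj⟩ := ht (e v) ⟨v, hv, rfl⟩
      obtain ⟨u, hu, rfl⟩ := hu'
      exact ⟨u, hu, hadj⟩

lemma totalForcingNumber_comap :
    (G.comap e).totalForcingNumber = G.totalForcingNumber := by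
  unfold SimpleGraph.totalForcingNumber
  congr 1
  ext n
  constructor
  · rintro ⟨S, hS, rfl⟩
    exact ⟨e '' S, (isTotalForcingSet_comap e G S).1 hS,
      Set.ncard_image_of_injective S e.injective⟩
  · rintro ⟨S', hS', rfl⟩
    refine ⟨e.symm '' S', ?_, Set.ncard_image_of_injective S' e.symm.injective⟩
    rw [isTotalForcingSet_comap]
    have : e '' (e.symm '' S') = S' := by
      rw [← Set.image_comp]; simp
    rwa [this]

lemma isPathSet_comap (Q : Set V) :
    (G.comap e).IsPathSet Q ↔ G.IsPathSet (e '' Q) := by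
  constructor
  · rintro ⟨u, v, w, hw, rfl⟩
    refine ⟨e u, e v, w.map ⟨e, fun h => h⟩, Walk.map_isPath_of_injective e.injective hw, ?_⟩
    ext x
    simp only [Walk.support_map, List.mem_map, Set.mem_setOf_eq, Set.mem_image]
    constructor
    · rintro ⟨y, hy, rfl⟩; exact ⟨y, hy, rfl⟩
    · rintro ⟨y, hy, rfl⟩; exact ⟨y, hy, rfl⟩
  · rintro ⟨u, v, w, hw, hQ⟩
    let hom : G →g (G.comap e) := ⟨e.symm, fun {a b} h => by
      show G.Adj (e (e.symm a)) (e (e.symm b)); simpa using h⟩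
    have hcoe : ∀ x, hom x = e.symm x := fun _ => rfl
    refine ⟨_, _, w.map hom, Walk.map_isPath_of_injective
      (fun a b hab => e.symm.injective (by rw [← hcoe, ← hcoe]; exact hab)) hw, ?_⟩
    ext x
    simp only [Walk.support_map, List.mem_map, Set.mem_setOf_eq, hcoe]
    constructor
    · rintro ⟨y, hy, rfl⟩
      have : y ∈ e '' Q := by rw [← hQ]; exact hy
      obtain ⟨z, hz, rfl⟩ := this
      simpa using hz
    · intro hx
      refine ⟨e x, ?_, by simp⟩
      have : e x ∈ e '' Q := ⟨x, hx, rfl⟩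
      rw [← hQ] at this
      exact this

lemma isPathCover_comap (P : Set (Set V)) :
    (G.comap e).IsPathCover P ↔ G.IsPathCover ((Set.image e) '' P) := by
  constructor
  · rintro ⟨hp, hd, hu⟩
    refine ⟨?_, ?_, ?_⟩
    · rintro Q' ⟨Q, hQ, rfl⟩
      exact (isPathSet_comap e G Q).1 (hp Q hQ)
    · rintro A ⟨Q1, h1, rfl⟩ B ⟨Q2, h2, rfl⟩ hne
      have hne' : Q1 ≠ Q2 := fun hh => hne (by rw [hh])
      have := hd h1 h2 hne'
      simpa [Function.onFun, Set.disjoint_image_iff e.injective] using this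
    · rw [← Set.image_sUnion, hu, Set.image_univ, e.range_eq_univ]
  · rintro ⟨hp, hd, hu⟩
    refine ⟨?_, ?_, ?_⟩
    · intro Q hQ
      exact (isPathSet_comap e G Q).2 (hp (e '' Q) ⟨Q, hQ, rfl⟩)
    · intro A h1 B h2 hne
      have := hd (Set.mem_image_of_mem _ h1) (Set.mem_image_of_mem _ h2)
        (fun hh => hne (by
          have := congrArg (Set.image e.symm) hh
          simpa [← Set.image_comp] using this))
      simpa [Function.onFun, Set.disjoint_image_iff e.injective] using this
    · rw [← Set.image_sUnion] at hu
      have h2 := congrArg (Set.image ⇑e.symm) hu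
      rw [← Set.image_comp] at h2
      simpa using h2

lemma pathCoverNumber_comap :
    (G.comap e).pathCoverNumber = G.pathCoverNumber := by
  unfold SimpleGraph.pathCoverNumber
  congr 1
  ext n
  constructor
  · rintro ⟨P, hP, rfl⟩
    refine ⟨(Set.image e) '' P, (isPathCover_comap e G P).1 hP, ?_⟩
    exact Set.ncard_image_of_injective P (Set.image_injective.2 e.injective)
  · rintro ⟨P', hP', rfl⟩
    refine ⟨(Set.image e.symm) '' P', ?_, ?_⟩
    · rw [isPathCover_comap]
      have : (Set.image e) '' ((Set.image e.symm) '' P') = P' := by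
        rw [← Set.image_comp]
        have : (Set.image e) ∘ (Set.image e.symm) = id := by
          funext A; simp [← Set.image_comp]
        rw [this, Set.image_id]
      rwa [this]
    · exact Set.ncard_image_of_injective P' (Set.image_injective.2 e.symm.injective)

lemma isTree_comap (h : G.IsTree) : (G.comap e).IsTree := by
  constructor
  · exact ((Iso.comap e G).connected_iff).2 h.isConnected
  · intro v c hc
    have := hc.map (f := (Iso.comap e G).toHom) e.injective
    exact h.IsAcyclic _ this
end Transfer
section Construction
variable (g m : ℕ)

/-- vertex type: center ⊕ pendant leaves ⊕ gadgets (x,y,z coded by Fin 3) -/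
abbrev WV := Unit ⊕ (Fin m ⊕ (Fin g × Fin 3))

variable {g m}

def vC : WV g m := Sum.inl ()
def vP (j : Fin m) : WV g m := Sum.inr (Sum.inl j)
def vX (i : Fin g) : WV g m := Sum.inr (Sum.inr (i, 0))
def vY (i : Fin g) : WV g m := Sum.inr (Sum.inr (i, 1))
def vZ (i : Fin g) : WV g m := Sum.inr (Sum.inr (i, 2))

@[simp] lemma vC_ne_vP (j : Fin m) : (vC : WV g m) ≠ vP j := by simp [vC, vP]
@[simp] lemma vC_ne_vX (i : Fin g) : (vC : WV g m) ≠ vX i := by simp [vC, vX]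
@[simp] lemma vC_ne_vY (i : Fin g) : (vC : WV g m) ≠ vY i := by simp [vC, vY]
@[simp] lemma vC_ne_vZ (i : Fin g) : (vC : WV g m) ≠ vZ i := by simp [vC, vZ]
@[simp] lemma vP_ne_vC (j : Fin m) : (vP j : WV g m) ≠ vC := by simp [vC, vP]
@[simp] lemma vX_ne_vC (i : Fin g) : (vX i : WV g m) ≠ vC := by simp [vC, vX]
@[simp] lemma vY_ne_vC (i : Fin g) : (vY i : WV g m) ≠ vC := by simp [vC, vY]
@[simp] lemma vZ_ne_vC (i : Fin g) : (vZ i : WV g m) ≠ vC := by simp [vC, vZ]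
@[simp] lemma vP_ne_vX (j : Fin m) (i : Fin g) : (vP j : WV g m) ≠ vX i := by simp [vP, vX]
@[simp] lemma vP_ne_vY (j : Fin m) (i : Fin g) : (vP j : WV g m) ≠ vY i := by simp [vP, vY]
@[simp] lemma vP_ne_vZ (j : Fin m) (i : Fin g) : (vP j : WV g m) ≠ vZ i := by simp [vP, vZ]
@[simp] lemma vX_ne_vP (i : Fin g) (j : Fin m) : (vX i : WV g m) ≠ vP j := by simp [vP, vX]
@[simp] lemma vY_ne_vP (i : Fin g) (j : Fin m) : (vY i : WV g m) ≠ vP j := by simp [vP, vY]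
@[simp] lemma vZ_ne_vP (i : Fin g) (j : Fin m) : (vZ i : WV g m) ≠ vP j := by simp [vP, vZ]
@[simp] lemma vX_ne_vY (i i' : Fin g) : (vX i : WV g m) ≠ vY i' := by
  simp only [vX, vY]; intro h; simpa using h
@[simp] lemma vX_ne_vZ (i i' : Fin g) : (vX i : WV g m) ≠ vZ i' := by
  simp only [vX, vZ]; intro h; simpa using h
@[simp] lemma vY_ne_vX (i i' : Fin g) : (vY i : WV g m) ≠ vX i' := by
  simp only [vY, vX]; intro h; simpa using h
@[simp] lemma vY_ne_vZ (i i' : Fin g) : (vY i : WV g m) ≠ vZ i' := by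
  simp only [vY, vZ]; intro h; simpa using h
@[simp] lemma vZ_ne_vX (i i' : Fin g) : (vZ i : WV g m) ≠ vX i' := by
  simp only [vZ, vX]; intro h; simpa using h
@[simp] lemma vZ_ne_vY (i i' : Fin g) : (vZ i : WV g m) ≠ vY i' := by
  simp only [vZ, vY]; intro h; simpa using h
@[simp] lemma vP_inj {j j' : Fin m} : (vP j : WV g m) = vP j' ↔ j = j' := by simp [vP]
@[simp] lemma vX_inj {i i' : Fin g} : (vX i : WV g m) = vX i' ↔ i = i' := by simp [vX]
@[simp] lemma vY_inj {i i' : Fin g} : (vY i : WV g m) = vY i' ↔ i = i' := by simp [vY]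
@[simp] lemma vZ_inj {i i' : Fin g} : (vZ i : WV g m) = vZ i' ↔ i = i' := by simp [vZ]

variable (g m) in
def RW : WV g m → WV g m → Prop := fun a b =>
  (∃ j, a = vC ∧ b = vP j) ∨ (∃ i, a = vC ∧ b = vY i) ∨
  (∃ i, a = vY i ∧ b = vX i) ∨ (∃ i, a = vY i ∧ b = vZ i)

variable (g m) in
def GW : SimpleGraph (WV g m) := SimpleGraph.fromRel (RW g m)

lemma adj_CP (j : Fin m) : (GW g m).Adj vC (vP j) :=
  ⟨by simp, Or.inl (Or.inl ⟨j, rfl, rfl⟩)⟩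
lemma adj_CY (i : Fin g) : (GW g m).Adj vC (vY i) :=
  ⟨by simp, Or.inl (Or.inr (Or.inl ⟨i, rfl, rfl⟩))⟩
lemma adj_YX (i : Fin g) : (GW g m).Adj (vY i) (vX i) :=
  ⟨by simp, Or.inl (Or.inr (Or.inr (Or.inl ⟨i, rfl, rfl⟩)))⟩
lemma adj_YZ (i : Fin g) : (GW g m).Adj (vY i) (vZ i) :=
  ⟨by simp, Or.inl (Or.inr (Or.inr (Or.inr ⟨i, rfl, rfl⟩)))⟩

lemma nbr_P {j : Fin m} {w : WV g m} : (GW g m).Adj (vP j) w ↔ w = vC := by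
  constructor
  · rintro ⟨hne, (⟨j', h1, h2⟩ | ⟨i, h1, h2⟩ | ⟨i, h1, h2⟩ | ⟨i, h1, h2⟩) |
      (⟨j', h1, h2⟩ | ⟨i, h1, h2⟩ | ⟨i, h1, h2⟩ | ⟨i, h1, h2⟩)⟩ <;> simp_all
  · rintro rfl; exact (adj_CP j).symm

lemma nbr_X {i : Fin g} {w : WV g m} : (GW g m).Adj (vX i) w ↔ w = vY i := by
  constructor
  · rintro ⟨hne, (⟨j', h1, h2⟩ | ⟨i', h1, h2⟩ | ⟨i', h1, h2⟩ | ⟨i', h1, h2⟩) |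
      (⟨j', h1, h2⟩ | ⟨i', h1, h2⟩ | ⟨i', h1, h2⟩ | ⟨i', h1, h2⟩)⟩ <;> simp_all
  · rintro rfl; exact (adj_YX i).symm

lemma nbr_Z {i : Fin g} {w : WV g m} : (GW g m).Adj (vZ i) w ↔ w = vY i := by
  constructor
  · rintro ⟨hne, (⟨j', h1, h2⟩ | ⟨i', h1, h2⟩ | ⟨i', h1, h2⟩ | ⟨i', h1, h2⟩) |
      (⟨j', h1, h2⟩ | ⟨i', h1, h2⟩ | ⟨i', h1, h2⟩ | ⟨i', h1, h2⟩)⟩ <;> simp_all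
  · rintro rfl; exact (adj_YZ i).symm

lemma nbr_Y {i : Fin g} {w : WV g m} :
    (GW g m).Adj (vY i) w ↔ w = vC ∨ w = vX i ∨ w = vZ i := by
  constructor
  · rintro ⟨hne, (⟨j', h1, h2⟩ | ⟨i', h1, h2⟩ | ⟨i', h1, h2⟩ | ⟨i', h1, h2⟩) |
      (⟨j', h1, h2⟩ | ⟨i', h1, h2⟩ | ⟨i', h1, h2⟩ | ⟨i', h1, h2⟩)⟩ <;> simp_all
  · rintro (rfl | rfl | rfl)
    exacts [(adj_CY i).symm, adj_YX i, adj_YZ i]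

lemma nbr_C {w : WV g m} :
    (GW g m).Adj vC w ↔ (∃ j, w = vP j) ∨ ∃ i, w = vY i := by
  constructor
  · rintro ⟨hne, (⟨j', h1, h2⟩ | ⟨i', h1, h2⟩ | ⟨i', h1, h2⟩ | ⟨i', h1, h2⟩) |
      (⟨j', h1, h2⟩ | ⟨i', h1, h2⟩ | ⟨i', h1, h2⟩ | ⟨i', h1, h2⟩)⟩ <;> simp_all
  · rintro (⟨j, rfl⟩ | ⟨i, rfl⟩)
    exacts [adj_CP j, adj_CY i]

end Construction
section General2
variable {V : Type*} {G : SimpleGraph V}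

lemma support_rotate_subset [DecidableEq V] {v u : V} (c : G.Walk v v) (hu : u ∈ c.support) :
    ∀ x ∈ (c.rotate u hu).support, x ∈ c.support := by
  intro x hx
  rw [Walk.support_eq_cons] at hx
  rcases List.mem_cons.mp hx with rfl | hx
  · exact hu
  · have := (Walk.support_rotate c _ hu).mem_iff.mp hx
    rw [Walk.support_eq_cons c]
    exact List.mem_cons_of_mem _ this

lemma no_cycle_through_unique_nbr [DecidableEq V] {a b v : V} (c : G.Walk v v)
    (hc : c.IsCycle) (ha : a ∈ c.support) (hb : ∀ x, G.Adj a x → x = b) : False :=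
  cycle_no_unique_nbr (c.rotate a ha) (hc.rotate ha)
    (fun x y hx hy _ _ => (hb x hx).trans (hb y hy).symm)
end General2

section Construction2
variable {g m : ℕ}

lemma wv_cases (w : WV g m) : w = vC ∨ (∃ j, w = vP j) ∨ (∃ i, w = vX i) ∨
    (∃ i, w = vY i) ∨ (∃ i, w = vZ i) := by
  rcases w with ⟨⟩ | j | ⟨i, t⟩
  · exact Or.inl rfl
  · exact Or.inr (Or.inl ⟨j, rfl⟩)
  · rcases t with ⟨tv, ht⟩
    interval_cases tv
    · exact Or.inr (Or.inr (Or.inl ⟨i, by simp [vX, Fin.ext_iff]⟩))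
    · exact Or.inr (Or.inr (Or.inr (Or.inl ⟨i, by simp [vY, Fin.ext_iff]⟩)))
    · exact Or.inr (Or.inr (Or.inr (Or.inr ⟨i, by simp [vZ, Fin.ext_iff]⟩)))

lemma gw_connected : (GW g m).Connected := by
  have reach : ∀ w : WV g m, (GW g m).Reachable w vC := by
    intro w
    rcases wv_cases w with rfl | ⟨j, rfl⟩ | ⟨i, rfl⟩ | ⟨i, rfl⟩ | ⟨i, rfl⟩
    · exact Reachable.refl _
    · exact (adj_CP j).symm.reachable
    · exact ((adj_YX i).symm.reachable).trans (adj_CY i).symm.reachable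
    · exact (adj_CY i).symm.reachable
    · exact ((adj_YZ i).symm.reachable).trans (adj_CY i).symm.reachable
  exact (connected_iff (GW g m)).mpr ⟨fun u v => (reach u).trans (reach v).symm, ⟨vC⟩⟩

lemma gw_acyclic : (GW g m).IsAcyclic := by
  intro v c hc
  have hsub : ∀ w ∈ c.support, w = vC ∨ ∃ i, w = (vY i : WV g m) := by
    intro w hw
    rcases wv_cases w with rfl | ⟨j, rfl⟩ | ⟨i, rfl⟩ | ⟨i, rfl⟩ | ⟨i, rfl⟩
    · exact Or.inl rfl
    · exact absurd (no_cycle_through_unique_nbr c hc hw (fun x hx => nbr_P.mp hx)) id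
    · exact absurd (no_cycle_through_unique_nbr c hc hw (fun x hx => nbr_X.mp hx)) id
    · exact Or.inr ⟨i, rfl⟩
    · exact absurd (no_cycle_through_unique_nbr c hc hw (fun x hx => nbr_Z.mp hx)) id
  -- find some vY in the support
  have hY : ∃ i, (vY i : WV g m) ∈ c.support := by
    cases c with
    | nil => exact absurd hc Walk.IsCycle.not_of_nil
    | @cons _ s _ h1 p =>
      have hs : s ∈ (Walk.cons h1 p).support := by
        rw [Walk.support_cons]; exact List.mem_cons_of_mem _ p.start_mem_support
      have hv : v ∈ (Walk.cons h1 p).support := Walk.start_mem_support _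
      rcases hsub v hv with rfl | ⟨i, rfl⟩
      · rcases hsub s hs with rfl | ⟨i, rfl⟩
        · exact absurd h1 ((GW g m).loopless.irrefl _)
        · exact ⟨i, hs⟩
      · exact ⟨i, hv⟩
  obtain ⟨i, hi⟩ := hY
  refine cycle_no_unique_nbr (c.rotate _ hi) (hc.rotate hi) ?_
  intro x y hx hy hxs hys
  have hx' := hsub x (support_rotate_subset c hi x hxs)
  have hy' := hsub y (support_rotate_subset c hi y hys)
  have hxn := nbr_Y.mp hx
  have hyn := nbr_Y.mp hy
  have : x = vC := by
    rcases hxn with rfl | rfl | rfl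
    · rfl
    · rcases hx' with h | ⟨i', h⟩ <;> simp at h
    · rcases hx' with h | ⟨i', h⟩ <;> simp at h
  have hyC : y = vC := by
    rcases hyn with rfl | rfl | rfl
    · rfl
    · rcases hy' with h | ⟨i', h⟩ <;> simp at h
    · rcases hy' with h | ⟨i', h⟩ <;> simp at h
  rw [this, hyC]

lemma gw_isTree : (GW g m).IsTree := ⟨gw_connected, gw_acyclic⟩
end Construction2
section PCUpper
variable {g m : ℕ}

def gadgetSet (i : Fin g) : Set (WV g m) := {vX i, vY i, vZ i}

def leafSet (hm : 2 ≤ m) : Set (WV g m) :=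
  {vP ⟨0, by omega⟩, vC, vP ⟨1, by omega⟩}

def singSet (hm : 2 ≤ m) (t : Fin (m - 2)) : Set (WV g m) :=
  {vP ⟨t.1 + 2, by omega⟩}

def coverP (g : ℕ) (hm : 2 ≤ m) : Set (Set (WV g m)) :=
  Set.range gadgetSet ∪ {leafSet hm} ∪ Set.range (singSet hm)

lemma gadgetSet_isPathSet (i : Fin g) : (GW g m).IsPathSet (gadgetSet i) := by
  refine ⟨vX i, vZ i, Walk.cons (adj_YX i).symm (Walk.cons (adj_YZ i) Walk.nil), ?_, ?_⟩
  · rw [Walk.isPath_def]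
    simp [Walk.support_cons]
  · ext x
    simp [gadgetSet, Walk.support_cons]

lemma leafSet_isPathSet (hm : 2 ≤ m) : (GW g m).IsPathSet (leafSet hm) := by
  refine ⟨vP ⟨0, by omega⟩, vP ⟨1, by omega⟩,
    Walk.cons (adj_CP ⟨0, by omega⟩).symm (Walk.cons (adj_CP ⟨1, by omega⟩) Walk.nil), ?_, ?_⟩
  · rw [Walk.isPath_def]
    simp [Walk.support_cons, Fin.ext_iff]
  · ext x
    simp only [leafSet, Walk.support_cons, Walk.support_nil, List.mem_cons,
      List.mem_singleton, Set.mem_insert_iff, Set.mem_singleton_iff, List.not_mem_nil, or_false,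
      Set.mem_setOf_eq]

lemma singSet_isPathSet (hm : 2 ≤ m) (t : Fin (m - 2)) :
    (GW g m).IsPathSet (singSet hm t) := by
  refine ⟨vP ⟨t.1 + 2, by omega⟩, vP ⟨t.1 + 2, by omega⟩, Walk.nil, ?_, ?_⟩
  · exact Walk.IsPath.nil
  · ext x; simp [singSet]

lemma coverP_isPathCover (hm : 2 ≤ m) : (GW g m).IsPathCover (coverP g hm) := by
  refine ⟨?_, ?_, ?_⟩
  · rintro Q ((⟨i, rfl⟩ | rfl) | ⟨t, rfl⟩)
    · exact gadgetSet_isPathSet i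
    · exact leafSet_isPathSet hm
    · exact singSet_isPathSet hm t
  · rintro A hA B hB hne
    simp only [Function.onFun, id_eq]
    rw [Set.disjoint_left]
    rintro x hx hy
    exfalso
    rcases hA with ((⟨i, rfl⟩ | rfl) | ⟨t, rfl⟩) <;>
      rcases hB with ((⟨i', rfl⟩ | rfl) | ⟨t', rfl⟩) <;>
      simp only [gadgetSet, leafSet, singSet, Set.mem_insert_iff, Set.mem_singleton_iff] at hx hy
    · have : i = i' := by
        rcases hx with rfl | rfl | rfl <;> rcases hy with h | h | h <;> simp_all
      exact hne (by rw [this])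
    · rcases hx with rfl | rfl | rfl <;> simp_all
    · rcases hx with rfl | rfl | rfl <;> simp_all
    · rcases hy with rfl | rfl | rfl <;> simp_all
    · exact hne rfl
    · rcases hx with rfl | rfl | rfl <;> simp_all [Fin.ext_iff]
    · rcases hy with rfl | rfl | rfl <;> simp_all
    · rcases hy with rfl | rfl | rfl <;> simp_all [Fin.ext_iff]
    · have : t = t' := by
        rw [hx] at hy
        simp only [vP_inj, Fin.ext_iff] at hy
        exact Fin.ext (by omega)
      exact hne (by rw [this])
  · ext w
    simp only [Set.mem_univ, iff_true, Set.mem_sUnion]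
    rcases wv_cases w with rfl | ⟨j, rfl⟩ | ⟨i, rfl⟩ | ⟨i, rfl⟩ | ⟨i, rfl⟩
    · exact ⟨leafSet hm, Or.inl (Or.inr rfl), Or.inr (Or.inl rfl)⟩
    · by_cases hj : j.1 < 2
      · refine ⟨leafSet hm, Or.inl (Or.inr rfl), ?_⟩
        simp only [leafSet, Set.mem_insert_iff, Set.mem_singleton_iff]
        have hj' : j.1 = 0 ∨ j.1 = 1 := by omega
        rcases hj' with h0 | h1
        · left; simp [Fin.ext_iff, h0]
        · right; right; simp [Fin.ext_iff, h1]
      · refine ⟨singSet hm ⟨j.1 - 2, by omega⟩, Or.inr ⟨_, rfl⟩, ?_⟩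
        simp only [singSet, Set.mem_singleton_iff, vP_inj, Fin.ext_iff]
        omega
    · exact ⟨gadgetSet i, Or.inl (Or.inl ⟨i, rfl⟩), Or.inl rfl⟩
    · exact ⟨gadgetSet i, Or.inl (Or.inl ⟨i, rfl⟩), Or.inr (Or.inl rfl)⟩
    · exact ⟨gadgetSet i, Or.inl (Or.inl ⟨i, rfl⟩), Or.inr (Or.inr rfl)⟩

lemma coverP_ncard (hm : 2 ≤ m) : (coverP g hm).ncard = g + m - 1 := by
  have hg : (Set.range (gadgetSet : Fin g → Set (WV g m))).ncard = g := by
    rw [← Set.image_univ, Set.ncard_image_of_injective _ ?_, Set.ncard_univ]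
    · simp
    · intro i i' h
      have : (vY i : WV g m) ∈ gadgetSet i' := by
        rw [← h]; simp [gadgetSet]
      simpa [gadgetSet] using this
  have hs : (Set.range (singSet hm : Fin (m-2) → Set (WV g m))).ncard = m - 2 := by
    rw [← Set.image_univ, Set.ncard_image_of_injective _ ?_, Set.ncard_univ]
    · simp
    · intro t t' h
      have : (vP ⟨t.1 + 2, by omega⟩ : WV g m) ∈ singSet hm t' := by
        rw [← h]; simp [singSet]
      simp only [singSet, Set.mem_singleton_iff, vP_inj, Fin.ext_iff] at this
      exact Fin.ext (by omega)
  have d1 : Disjoint (Set.range (gadgetSet : Fin g → Set (WV g m))) {leafSet hm} := by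
    rw [Set.disjoint_left]
    rintro A ⟨i, rfl⟩ hA
    rw [Set.mem_singleton_iff] at hA
    have : (vY i : WV g m) ∈ leafSet hm := by rw [← hA]; simp [gadgetSet]
    simp [leafSet] at this
  have d2 : Disjoint (Set.range (gadgetSet : Fin g → Set (WV g m)) ∪ {leafSet hm})
      (Set.range (singSet hm)) := by
    rw [Set.disjoint_left]
    rintro A (⟨i, rfl⟩ | rfl) ⟨t, ht⟩
    · have : (vY i : WV g m) ∈ singSet hm t := by rw [ht]; simp [gadgetSet]
      simp [singSet] at this
    · have : (vC : WV g m) ∈ singSet hm t := by rw [ht]; simp [leafSet]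
      simp [singSet] at this
  rw [coverP, Set.ncard_union_eq d2 (Set.toFinite _) (Set.toFinite _),
    Set.ncard_union_eq d1 (Set.toFinite _) (Set.toFinite _), hg, hs,
    Set.ncard_singleton]
  omega
end PCUpper
section PCLower
variable {g m : ℕ}

def Lset (g m : ℕ) : Set (WV g m) := Set.range vP ∪ Set.range vX ∪ Set.range vZ
def Cset (g m : ℕ) : Set (WV g m) := insert vC (Set.range vY)

lemma Lset_unique_nbr {a : WV g m} (ha : a ∈ Lset g m) :
    ∃ b ∈ Cset g m, ∀ x, (GW g m).Adj a x → x = b := by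
  rcases ha with (⟨j, rfl⟩ | ⟨i, rfl⟩) | ⟨i, rfl⟩
  · exact ⟨vC, Or.inl rfl, fun x hx => nbr_P.mp hx⟩
  · exact ⟨vY i, Or.inr ⟨i, rfl⟩, fun x hx => nbr_X.mp hx⟩
  · exact ⟨vY i, Or.inr ⟨i, rfl⟩, fun x hx => nbr_Z.mp hx⟩

lemma Lset_ncard : (Lset g m).ncard = m + g + g := by
  have h1 : (Set.range (vP : Fin m → WV g m)).ncard = m := by
    rw [← Set.image_univ, Set.ncard_image_of_injective _ (fun a b h => vP_inj.mp h),
      Set.ncard_univ]; simp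
  have h2 : (Set.range (vX : Fin g → WV g m)).ncard = g := by
    rw [← Set.image_univ, Set.ncard_image_of_injective _ (fun a b h => vX_inj.mp h),
      Set.ncard_univ]; simp
  have h3 : (Set.range (vZ : Fin g → WV g m)).ncard = g := by
    rw [← Set.image_univ, Set.ncard_image_of_injective _ (fun a b h => vZ_inj.mp h),
      Set.ncard_univ]; simp
  have d1 : Disjoint (Set.range (vP : Fin m → WV g m)) (Set.range (vX : Fin g → WV g m)) := by
    rw [Set.disjoint_left]; rintro x ⟨j, rfl⟩ ⟨i, h⟩; exact vX_ne_vP i j h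
  have d2 : Disjoint (Set.range (vP : Fin m → WV g m) ∪ Set.range vX)
      (Set.range (vZ : Fin g → WV g m)) := by
    rw [Set.disjoint_left]; rintro x (⟨j, rfl⟩ | ⟨i, rfl⟩) ⟨i', h⟩
    · exact vZ_ne_vP i' j h
    · exact vZ_ne_vX i' i h
  rw [Lset, Set.ncard_union_eq d2 (Set.toFinite _) (Set.toFinite _),
    Set.ncard_union_eq d1 (Set.toFinite _) (Set.toFinite _), h1, h2, h3]

lemma Cset_ncard : (Cset g m).ncard = g + 1 := by
  have h2 : (Set.range (vY : Fin g → WV g m)).ncard = g := by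
    rw [← Set.image_univ, Set.ncard_image_of_injective _ (fun a b h => vY_inj.mp h),
      Set.ncard_univ]; simp
  rw [Cset, Set.ncard_insert_of_notMem (by rintro ⟨i, h⟩; exact vY_ne_vC i h)
    (Set.toFinite _), h2]

lemma two_leaves_meet_C {P : Set (Set (WV g m))} (hP : (GW g m).IsPathCover P)
    {Q : Set (WV g m)} (hQ : Q ∈ P) {a b : WV g m} (haQ : a ∈ Q) (hbQ : b ∈ Q)
    (haL : a ∈ Lset g m) (hbL : b ∈ Lset g m) (hab : a ≠ b) :
    ∃ w ∈ Q, w ∈ Cset g m := by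
  obtain ⟨u, v, wlk, hpath, hsupp⟩ := hP.1 Q hQ
  obtain ⟨ba, hbaC, hba⟩ := Lset_unique_nbr haL
  obtain ⟨bb, hbbC, hbb⟩ := Lset_unique_nbr hbL
  have haS : a ∈ wlk.support := by rw [← hsupp] at haQ; exact haQ
  have hbS : b ∈ wlk.support := by rw [← hsupp] at hbQ; exact hbQ
  have hae := endpoint_of_unique_nbr wlk hpath haS hba
  have hbe := endpoint_of_unique_nbr wlk hpath hbS hbb
  have huv : u ≠ v := by
    rintro rfl
    rcases hae with rfl | rfl <;> rcases hbe with rfl | rfl <;> exact hab rfl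
  -- the start u of the walk is a leaf
  have hustart : u = a ∨ u = b := by
    rcases hae with rfl | rfl
    · exact Or.inl rfl
    · rcases hbe with rfl | rfl
      · exact Or.inr rfl
      · exact absurd rfl hab
  obtain ⟨s, hadj, hsS⟩ := second_vertex wlk huv
  have hsQ : s ∈ Q := by rw [← hsupp]; exact hsS
  rcases hustart with rfl | rfl
  · exact ⟨s, hsQ, (hba s hadj) ▸ hbaC⟩
  · exact ⟨s, hsQ, (hbb s hadj) ▸ hbbC⟩

lemma leaves_in_path_le_two {P : Set (Set (WV g m))} (hP : (GW g m).IsPathCover P)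
    {Q : Set (WV g m)} (hQ : Q ∈ P) : (Lset g m ∩ Q).ncard ≤ 2 := by
  obtain ⟨u, v, wlk, hpath, hsupp⟩ := hP.1 Q hQ
  have hsub : Lset g m ∩ Q ⊆ {u, v} := by
    rintro a ⟨haL, haQ⟩
    obtain ⟨ba, _, hba⟩ := Lset_unique_nbr haL
    have haS : a ∈ wlk.support := by rw [← hsupp] at haQ; exact haQ
    rcases endpoint_of_unique_nbr wlk hpath haS hba with rfl | rfl
    · exact Or.inl rfl
    · exact Or.inr rfl
  calc (Lset g m ∩ Q).ncard ≤ ({u, v} : Set (WV g m)).ncard :=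
        Set.ncard_le_ncard hsub (Set.toFinite _)
    _ ≤ 2 := by
        rcases eq_or_ne u v with rfl | h
        · simp
        · rw [Set.ncard_pair h]

lemma pc_lower {P : Set (Set (WV g m))} (hP : (GW g m).IsPathCover P) :
    g + m - 1 ≤ P.ncard := by
  classical
  set Pf : Finset (Set (WV g m)) := (Set.toFinite P).toFinset with hPf
  have hPmem : ∀ Q, Q ∈ Pf ↔ Q ∈ P := fun Q => Set.Finite.mem_toFinset _
  -- L as biUnion
  have hLcard : (Lset g m).ncard = m + g + g := Lset_ncard
  have hbi : ((Set.toFinite (Lset g m)).toFinset) =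
      Pf.biUnion (fun Q => (Set.toFinite (Lset g m ∩ Q)).toFinset) := by
    ext x
    simp only [Set.Finite.mem_toFinset, Finset.mem_biUnion]
    constructor
    · intro hx
      have : x ∈ ⋃₀ P := by rw [hP.2.2]; trivial
      obtain ⟨Q, hQ, hxQ⟩ := this
      exact ⟨Q, (hPmem Q).2 hQ, hx, hxQ⟩
    · rintro ⟨Q, _, hx, _⟩; exact hx
  have hdisj : ∀ Q1 ∈ Pf, ∀ Q2 ∈ Pf, Q1 ≠ Q2 →
      Disjoint ((Set.toFinite (Lset g m ∩ Q1)).toFinset)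
        ((Set.toFinite (Lset g m ∩ Q2)).toFinset) := by
    intro Q1 h1 Q2 h2 hne
    rw [Finset.disjoint_left]
    intro x hx1 hx2
    rw [Set.Finite.mem_toFinset] at hx1 hx2
    have := hP.2.1 ((hPmem Q1).1 h1) ((hPmem Q2).1 h2) hne
    simp only [Function.onFun, id_eq, Set.disjoint_left] at this
    exact this hx1.2 hx2.2
  have hcard1 : (Set.toFinite (Lset g m)).toFinset.card =
      ∑ Q ∈ Pf, ((Set.toFinite (Lset g m ∩ Q)).toFinset).card := by
    rw [hbi]; exact Finset.card_biUnion hdisj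
  -- bound each summand
  have hsummand : ∀ Q ∈ Pf, ((Set.toFinite (Lset g m ∩ Q)).toFinset).card ≤
      1 + if 2 ≤ ((Set.toFinite (Lset g m ∩ Q)).toFinset).card then 1 else 0 := by
    intro Q hQ
    have h2 : ((Set.toFinite (Lset g m ∩ Q)).toFinset).card ≤ 2 := by
      rw [← Set.ncard_eq_toFinset_card (Lset g m ∩ Q) (Set.toFinite _)]
      exact leaves_in_path_le_two hP ((hPmem Q).1 hQ)
    split <;> omega
  have hsum2 : ∑ Q ∈ Pf, ((Set.toFinite (Lset g m ∩ Q)).toFinset).card ≤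
      Pf.card + (Pf.filter (fun Q => 2 ≤ ((Set.toFinite (Lset g m ∩ Q)).toFinset).card)).card := by
    calc ∑ Q ∈ Pf, ((Set.toFinite (Lset g m ∩ Q)).toFinset).card
        ≤ ∑ Q ∈ Pf, (1 + if 2 ≤ ((Set.toFinite (Lset g m ∩ Q)).toFinset).card then 1 else 0) :=
          Finset.sum_le_sum hsummand
      _ = Pf.card + (Pf.filter (fun Q => 2 ≤ ((Set.toFinite (Lset g m ∩ Q)).toFinset).card)).card := by
          rw [Finset.sum_add_distrib, Finset.sum_const, smul_eq_mul, mul_one]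
          congr 1
          rw [Finset.card_filter]
  -- filter card ≤ g + 1
  have hfilter : (Pf.filter (fun Q => 2 ≤ ((Set.toFinite (Lset g m ∩ Q)).toFinset).card)).card ≤
      g + 1 := by
    have hmap : ∀ Q ∈ Pf.filter (fun Q => 2 ≤ ((Set.toFinite (Lset g m ∩ Q)).toFinset).card),
        ∃ w, w ∈ Q ∧ w ∈ Cset g m := by
      intro Q hQ
      rw [Finset.mem_filter] at hQ
      obtain ⟨hQP, hc⟩ := hQ
      have hc' : 1 < ((Set.toFinite (Lset g m ∩ Q)).toFinset).card := by omega
      obtain ⟨a, ha, b, hb, hab⟩ := Finset.one_lt_card.mp hc'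
      rw [Set.Finite.mem_toFinset] at ha hb
      obtain ⟨w, hw1, hw2⟩ := two_leaves_meet_C hP ((hPmem Q).1 hQP) ha.2 hb.2 ha.1 hb.1 hab
      exact ⟨w, hw1, hw2⟩
    set f : Set (WV g m) → WV g m := fun Q => if h : ∃ w, w ∈ Q ∧ w ∈ Cset g m
      then h.choose else vC with hf
    have := Finset.card_le_card_of_injOn f
      (s := Pf.filter (fun Q => 2 ≤ ((Set.toFinite (Lset g m ∩ Q)).toFinset).card))
      (t := (Set.toFinite (Cset g m)).toFinset) ?_ ?_
    · rwa [← Set.ncard_eq_toFinset_card (Cset g m) (Set.toFinite _), Cset_ncard] at this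
    · intro Q hQ
      have h := hmap Q hQ
      rw [hf]
      simp only [h, dif_pos]
      rw [Finset.mem_coe, Set.Finite.mem_toFinset]
      exact h.choose_spec.2
    · intro Q1 h1 Q2 h2 heq
      by_contra hne
      have hx1 := hmap Q1 h1
      have hx2 := hmap Q2 h2
      rw [hf] at heq
      simp only [hx1, hx2, dif_pos] at heq
      have m1 : hx1.choose ∈ Q1 := hx1.choose_spec.1
      have m2 : hx2.choose ∈ Q2 := hx2.choose_spec.1
      rw [heq] at m1
      rw [Finset.mem_coe, Finset.mem_filter] at h1 h2
      have := hP.2.1 ((hPmem Q1).1 h1.1) ((hPmem Q2).1 h2.1) hne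
      simp only [Function.onFun, id_eq, Set.disjoint_left] at this
      exact this m1 m2
  have hL : (Set.toFinite (Lset g m)).toFinset.card = m + g + g := by
    rw [← Set.ncard_eq_toFinset_card (Lset g m) (Set.toFinite _)]; exact hLcard
  have hPcard : P.ncard = Pf.card := Set.ncard_eq_toFinset_card _ _
  omega

lemma gw_pathCoverNumber (hm : 2 ≤ m) : (GW g m).pathCoverNumber = g + m - 1 := by
  apply Nat.le_antisymm
  · exact Nat.sInf_le ⟨coverP g hm, coverP_isPathCover hm, coverP_ncard hm⟩
  · refine le_csInf ⟨g + m - 1, coverP g hm, coverP_isPathCover hm, coverP_ncard hm⟩ ?_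
    rintro n ⟨P, hP, rfl⟩
    exact pc_lower hP
end PCLower
section FTUpper
variable {g m : ℕ}

def ftSet (g : ℕ) (hm : 2 ≤ m) : Set (WV g m) :=
  insert vC (Set.range (fun t : Fin (m-1) => vP ⟨t.1, by omega⟩) ∪
    Set.range vX ∪ Set.range vY)

lemma ftSet_zeroForcing (hm : 2 ≤ m) : (GW g m).IsZeroForcingSet (ftSet g hm) := by
  have hC : (GW g m).Forced (ftSet g hm) vC := Forced.init _ (Or.inl rfl)
  have hX : ∀ i, (GW g m).Forced (ftSet g hm) (vX i) :=
    fun i => Forced.init _ (Or.inr (Or.inl (Or.inr ⟨i, rfl⟩)))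
  have hY : ∀ i, (GW g m).Forced (ftSet g hm) (vY i) :=
    fun i => Forced.init _ (Or.inr (Or.inr ⟨i, rfl⟩))
  have hPsmall : ∀ j : Fin m, j.1 < m - 1 → (GW g m).Forced (ftSet g hm) (vP j) := by
    intro j hj
    exact Forced.init _ (Or.inr (Or.inl (Or.inl ⟨⟨j.1, by omega⟩, by simp⟩)))
  have hZ : ∀ i, (GW g m).Forced (ftSet g hm) (vZ i) := by
    intro i
    refine Forced.force (vY i) (vZ i) (hY i) (adj_YZ i) ?_
    intro x hx hne
    rcases nbr_Y.mp hx with rfl | rfl | rfl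
    · exact hC
    · exact hX i
    · exact absurd rfl hne
  have hPlast : ∀ j : Fin m, (GW g m).Forced (ftSet g hm) (vP j) := by
    intro j
    by_cases hj : j.1 < m - 1
    · exact hPsmall j hj
    · refine Forced.force vC (vP j) hC (adj_CP j) ?_
      intro x hx hne
      rcases nbr_C.mp hx with ⟨j', rfl⟩ | ⟨i, rfl⟩
      · refine hPsmall j' ?_
        have : j' ≠ j := fun hh => hne (by rw [hh])
        have hne' : j'.1 ≠ j.1 := fun hh => this (Fin.ext hh)
        have := j'.2
        omega
      · exact hY i
  intro v
  rcases wv_cases v with rfl | ⟨j, rfl⟩ | ⟨i, rfl⟩ | ⟨i, rfl⟩ | ⟨i, rfl⟩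
  exacts [hC, hPlast j, hX i, hY i, hZ i]

lemma ftSet_total (hm : 2 ≤ m) : (GW g m).IsTotalForcingSet (ftSet g hm) := by
  refine ⟨ftSet_zeroForcing hm, ?_⟩
  rintro v (rfl | ((⟨t, rfl⟩ | ⟨i, rfl⟩) | ⟨i, rfl⟩))
  · refine ⟨vP ⟨0, by omega⟩, ?_, adj_CP _⟩
    exact Or.inr (Or.inl (Or.inl ⟨⟨0, by omega⟩, by simp⟩))
  · exact ⟨vC, Or.inl rfl, (adj_CP _).symm⟩
  · exact ⟨vY i, Or.inr (Or.inr ⟨i, rfl⟩), (adj_YX i).symm⟩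
  · exact ⟨vC, Or.inl rfl, (adj_CY i).symm⟩

lemma ftSet_ncard (hm : 2 ≤ m) : (ftSet g hm).ncard = g + g + m := by
  have h1 : (Set.range (fun t : Fin (m-1) => (vP ⟨t.1, by omega⟩ : WV g m))).ncard = m - 1 := by
    rw [← Set.image_univ, Set.ncard_image_of_injective _ ?_, Set.ncard_univ]
    · simp
    · intro a b h
      simp only [vP_inj, Fin.ext_iff] at h
      exact Fin.ext h
  have h2 : (Set.range (vX : Fin g → WV g m)).ncard = g := by
    rw [← Set.image_univ, Set.ncard_image_of_injective _ (fun a b h => vX_inj.mp h),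
      Set.ncard_univ]; simp
  have h3 : (Set.range (vY : Fin g → WV g m)).ncard = g := by
    rw [← Set.image_univ, Set.ncard_image_of_injective _ (fun a b h => vY_inj.mp h),
      Set.ncard_univ]; simp
  have d1 : Disjoint (Set.range (fun t : Fin (m-1) => (vP ⟨t.1, by omega⟩ : WV g m)))
      (Set.range (vX : Fin g → WV g m)) := by
    rw [Set.disjoint_left]; rintro x ⟨t, rfl⟩ ⟨i, h⟩; exact vX_ne_vP i _ h
  have d2 : Disjoint (Set.range (fun t : Fin (m-1) => (vP ⟨t.1, by omega⟩ : WV g m)) ∪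
      Set.range vX) (Set.range (vY : Fin g → WV g m)) := by
    rw [Set.disjoint_left]; rintro x (⟨t, rfl⟩ | ⟨i, rfl⟩) ⟨i', h⟩
    · exact vY_ne_vP i' _ h
    · exact vY_ne_vX i' i h
  have hnotmem : (vC : WV g m) ∉ (Set.range (fun t : Fin (m-1) => (vP ⟨t.1, by omega⟩ : WV g m)) ∪
      Set.range vX ∪ Set.range vY) := by
    rintro ((⟨t, h⟩ | ⟨i, h⟩) | ⟨i, h⟩)
    · exact vP_ne_vC _ h
    · exact vX_ne_vC i h
    · exact vY_ne_vC i h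
  rw [ftSet, Set.ncard_insert_of_notMem hnotmem (Set.toFinite _),
    Set.ncard_union_eq d2 (Set.toFinite _) (Set.toFinite _),
    Set.ncard_union_eq d1 (Set.toFinite _) (Set.toFinite _), h1, h2, h3]
  omega
end FTUpper
section FTLower
variable {g m : ℕ} {S : Set (WV g m)}

lemma ft_gadget_leaf (hS : (GW g m).IsTotalForcingSet S) (i : Fin g) :
    vX i ∈ S ∨ vZ i ∈ S := by
  by_contra h
  push_neg at h
  obtain ⟨hx, hz⟩ := h
  have key : ∀ v, (GW g m).Forced S v → v ≠ vX i ∧ v ≠ vZ i := by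
    intro v hv
    induction hv with
    | init v hv =>
      constructor
      · rintro rfl; exact hx hv
      · rintro rfl; exact hz hv
    | force u w hu hadj huniq ihu ihuniq =>
      constructor
      · rintro rfl
        have hu' : u = vY i := nbr_X.mp hadj.symm
        subst hu'
        exact (ihuniq (vZ i) (adj_YZ i) (by simp)).2 rfl
      · rintro rfl
        have hu' : u = vY i := nbr_Z.mp hadj.symm
        subst hu'
        exact (ihuniq (vX i) (adj_YX i) (by simp)).1 rfl
  exact (key (vX i) (hS.1 (vX i))).1 rfl

lemma ft_vy (hS : (GW g m).IsTotalForcingSet S) (i : Fin g) : vY i ∈ S := by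
  rcases ft_gadget_leaf hS i with h | h
  · obtain ⟨u, huS, hadj⟩ := hS.2 _ h
    rwa [nbr_X.mp hadj] at huS
  · obtain ⟨u, huS, hadj⟩ := hS.2 _ h
    rwa [nbr_Z.mp hadj] at huS

lemma ft_pendant (hS : (GW g m).IsTotalForcingSet S) {a b : Fin m} (hab : a ≠ b)
    (ha : vP a ∉ S) (hb : vP b ∉ S) : False := by
  have key : ∀ v, (GW g m).Forced S v → v ≠ vP a ∧ v ≠ vP b := by
    intro v hv
    induction hv with
    | init v hv =>
      constructor
      · rintro rfl; exact ha hv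
      · rintro rfl; exact hb hv
    | force u w hu hadj huniq ihu ihuniq =>
      constructor
      · rintro rfl
        have hu' : u = vC := nbr_P.mp hadj.symm
        subst hu'
        exact (ihuniq (vP b) (adj_CP b) (by simp [hab.symm])).2 rfl
      · rintro rfl
        have hu' : u = vC := nbr_P.mp hadj.symm
        subst hu'
        exact (ihuniq (vP a) (adj_CP a) (by simp [hab])).1 rfl
  exact (key (vP a) (hS.1 (vP a))).1 rfl

lemma ft_vc (hm : 2 ≤ m) (hS : (GW g m).IsTotalForcingSet S) : vC ∈ S := by
  have hex : ∃ a : Fin m, vP a ∈ S := by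
    by_contra h
    push_neg at h
    have h01 : (⟨0, by omega⟩ : Fin m) ≠ ⟨1, by omega⟩ := by simp [Fin.ext_iff]
    exact ft_pendant hS h01 (h _) (h _)
  obtain ⟨a, ha⟩ := hex
  obtain ⟨u, huS, hadj⟩ := hS.2 _ ha
  rwa [nbr_P.mp hadj] at huS

lemma ft_lower (hm : 2 ≤ m) (hS : (GW g m).IsTotalForcingSet S) :
    g + g + m ≤ S.ncard := by
  classical
  set f : Fin g → WV g m := fun i => if vX i ∈ S then vX i else vZ i with hf
  have hfS : ∀ i, f i ∈ S := by
    intro i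
    rw [hf]
    rcases ft_gadget_leaf hS i with h | h
    · simp [h]
    · by_cases hx : vX i ∈ S <;> simp [hx, h]
  have hfXZ : ∀ i, f i ∈ Set.range (vX : Fin g → WV g m) ∪ Set.range vZ := by
    intro i
    rw [hf]
    by_cases hx : vX i ∈ S <;> simp [hx]
  have hfinj : Function.Injective f := by
    intro i j h
    rw [hf] at h
    by_cases hi : vX i ∈ S <;> by_cases hj : vX j ∈ S <;> simp [hi, hj] at h <;> exact h
  have hfcard : (f '' Set.univ).ncard = g := by
    rw [Set.ncard_image_of_injective _ hfinj, Set.ncard_univ]; simp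
  have hCsub : Cset g m ⊆ S := by
    rintro x (rfl | ⟨i, rfl⟩)
    · exact ft_vc hm hS
    · exact ft_vy hS i
  have dCB : Disjoint (Cset g m) (f '' Set.univ) := by
    rw [Set.disjoint_left]
    rintro x hC ⟨j, -, rfl⟩
    rcases hfXZ j with ⟨j', h⟩ | ⟨j', h⟩ <;> rcases hC with hc | ⟨i, hi⟩
    · exact vX_ne_vC j' (h.trans hc)
    · exact vX_ne_vY j' i (h.trans hi.symm)
    · exact vZ_ne_vC j' (h.trans hc)
    · exact vZ_ne_vY j' i (h.trans hi.symm)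
  -- pendant part
  by_cases hall : ∀ a : Fin m, vP a ∈ S
  · set D : Set (WV g m) := Set.range vP with hD
    have hDcard : D.ncard = m := by
      rw [hD, ← Set.image_univ, Set.ncard_image_of_injective _
        (fun a b h => vP_inj.mp h), Set.ncard_univ]; simp
    have hDsub : D ⊆ S := by rintro x ⟨a, rfl⟩; exact hall a
    have dD : Disjoint (Cset g m ∪ f '' Set.univ) D := by
      rw [Set.disjoint_left]
      rintro x h1 ⟨b, rfl⟩
      rcases h1 with (hc | ⟨i, hi⟩) | ⟨j, -, hj⟩
      · exact vP_ne_vC b hc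
      · exact vY_ne_vP i b hi
      · rcases hfXZ j with ⟨j', h⟩ | ⟨j', h⟩
        · exact vX_ne_vP j' b (h.trans hj)
        · exact vZ_ne_vP j' b (h.trans hj)
    have hle : ((Cset g m ∪ f '' Set.univ) ∪ D).ncard ≤ S.ncard := by
      apply Set.ncard_le_ncard _ (Set.toFinite _)
      intro x hx
      rcases hx with (hx | ⟨j, _, rfl⟩) | hx
      · exact hCsub hx
      · exact hfS j
      · exact hDsub hx
    rw [Set.ncard_union_eq dD (Set.toFinite _) (Set.toFinite _),
      Set.ncard_union_eq dCB (Set.toFinite _) (Set.toFinite _),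
      Cset_ncard, hfcard, hDcard] at hle
    omega
  · push_neg at hall
    obtain ⟨a, ha⟩ := hall
    set D : Set (WV g m) := vP '' {b | b ≠ a} with hD
    have hDcard : D.ncard = m - 1 := by
      rw [hD, Set.ncard_image_of_injective _ (fun a b h => vP_inj.mp h)]
      have : ({b | b ≠ a} : Set (Fin m)) = Set.univ \ {a} := by
        ext x; simp
      rw [this, Set.ncard_diff (by simp) (Set.toFinite _), Set.ncard_univ,
        Set.ncard_singleton]
      simp
    have hDsub : D ⊆ S := by
      rintro x ⟨b, hb, rfl⟩
      by_contra hbS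
      exact ft_pendant hS hb hbS ha
    have dD : Disjoint (Cset g m ∪ f '' Set.univ) D := by
      rw [Set.disjoint_left]
      rintro x h1 ⟨b, -, rfl⟩
      rcases h1 with (hc | ⟨i, hi⟩) | ⟨j, -, hj⟩
      · exact vP_ne_vC b hc
      · exact vY_ne_vP i b hi
      · rcases hfXZ j with ⟨j', h⟩ | ⟨j', h⟩
        · exact vX_ne_vP j' b (h.trans hj)
        · exact vZ_ne_vP j' b (h.trans hj)
    have hle : ((Cset g m ∪ f '' Set.univ) ∪ D).ncard ≤ S.ncard := by
      apply Set.ncard_le_ncard _ (Set.toFinite _)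
      intro x hx
      rcases hx with (hx | ⟨j, _, rfl⟩) | hx
      · exact hCsub hx
      · exact hfS j
      · exact hDsub hx
    rw [Set.ncard_union_eq dD (Set.toFinite _) (Set.toFinite _),
      Set.ncard_union_eq dCB (Set.toFinite _) (Set.toFinite _),
      Cset_ncard, hfcard, hDcard] at hle
    omega

lemma gw_totalForcingNumber (hm : 2 ≤ m) :
    (GW g m).totalForcingNumber = g + g + m := by
  apply Nat.le_antisymm
  · exact Nat.sInf_le ⟨ftSet g hm, ftSet_total hm, by rw [ftSet_ncard hm]⟩
  · refine le_csInf ⟨g + g + m, ftSet g hm, ftSet_total hm, by rw [ftSet_ncard hm]⟩ ?_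
    rintro n ⟨S, hS, rfl⟩
    exact ft_lower hm hS
end FTLower
theorem stmt13 (k l : ℕ) (hk : 1 ≤ k) (hkl : k ≤ l) :
    ∃ (n : ℕ) (T : SimpleGraph (Fin n)), T.IsTree ∧
      T.pathCoverNumber = l ∧ T.totalForcingNumber = k + l := by
  set g := k - 1 with hg
  set m := l - k + 2 with hm'
  have hm : 2 ≤ m := by omega
  set n := Fintype.card (WV g m) with hn
  set e : Fin n ≃ WV g m := (Fintype.equivFin (WV g m)).symm with he
  refine ⟨n, (GW g m).comap ⇑e, ?_, ?_, ?_⟩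
  · exact isTree_comap e (GW g m) gw_isTree
  · rw [pathCoverNumber_comap e (GW g m), gw_pathCoverNumber hm]
    omega
  · rw [totalForcingNumber_comap e (GW g m), gw_totalForcingNumber hm]
    omega
end

section
/- If T is a tree with at least 2 vertices, then F_t(T) ≤ α'(T) + pc(T), where α'(T) is the matching number and pc(T) the path cover number. -/
section Helpers
open SimpleGraph Walk
variable {V : Type*} {T : SimpleGraph V}



lemma path_eq (hT : T.IsAcyclic) {u v : V} {p q : T.Walk u v} (hp : p.IsPath) (hq : q.IsPath) :
    p = q := by
  have := SimpleGraph.isAcyclic_iff_path_unique.mp hT (⟨p, hp⟩ : T.Path u v) ⟨q, hq⟩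
  exact congrArg Subtype.val this

/-- extract a sub-path between two support vertices, with support and edges contained. -/
lemma exists_subpath {a b x y : V} {w : T.Walk a b} (hw : w.IsPath)
    (hx : x ∈ w.support) (hy : y ∈ w.support) :
    ∃ p : T.Walk x y, p.IsPath ∧ (∀ z ∈ p.support, z ∈ w.support) ∧
      (∀ e ∈ p.edges, e ∈ w.edges) := by
  haveI := Classical.decEq V
  by_cases hx' : x ∈ (w.takeUntil y hy).support
  · refine ⟨(w.takeUntil y hy).dropUntil x hx', (hw.takeUntil _).dropUntil _, ?_, ?_⟩
    · intro z hz
      exact w.support_takeUntil_subset hy (((w.takeUntil y hy)).support_dropUntil_subset hx' hz)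
    · intro e he
      exact w.edges_takeUntil_subset hy (((w.takeUntil y hy)).edges_dropUntil_subset hx' he)
  · have hx2 : x ∈ (w.dropUntil y hy).support := by
      have := w.take_spec hy
      rw [← this, mem_support_append_iff] at hx
      rcases hx with h | h
      · exact absurd h hx'
      · exact h
    refine ⟨((w.dropUntil y hy).takeUntil x hx2).reverse, ((hw.dropUntil _).takeUntil _).reverse,
      ?_, ?_⟩
    · intro z hz
      rw [support_reverse, List.mem_reverse] at hz
      exact w.support_dropUntil_subset hy ((w.dropUntil y hy).support_takeUntil_subset hx2 hz)
    · intro e he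
      rw [edges_reverse, List.mem_reverse] at he
      exact w.edges_dropUntil_subset hy ((w.dropUntil y hy).edges_takeUntil_subset hx2 he)

/-- In a tree, an edge between two support vertices of a path is an edge of the path. -/
lemma edge_mem_of_adj (hT : T.IsAcyclic) {a b x y : V} {w : T.Walk a b} (hw : w.IsPath)
    (hx : x ∈ w.support) (hy : y ∈ w.support) (ha : T.Adj x y) : s(x, y) ∈ w.edges := by
  obtain ⟨p, hp, -, hes⟩ := exists_subpath hw hx hy
  have hq : (Walk.cons ha Walk.nil : T.Walk x y).IsPath := by
    simp [Walk.cons_isPath_iff, ha.ne]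
  have := path_eq hT hp hq
  apply hes
  rw [this]
  simp

/-- a path has at most one edge at its starting vertex -/
lemma no_two_edges_at_start {u v : V} (q : T.Walk u v) (hq : q.IsPath) {y1 y2 : V}
    (hne : y1 ≠ y2) (h1 : s(u, y1) ∈ q.edges) (h2 : s(u, y2) ∈ q.edges) : False := by
  induction q with
  | nil => simp at h1
  | @cons a b c h p ih =>
    rw [Walk.cons_isPath_iff] at hq
    have key : ∀ y, s(a, y) ∈ (Walk.cons h p).edges → y = b := by
      intro y hy
      rw [Walk.edges_cons, List.mem_cons] at hy
      rcases hy with hy | hy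
      · rw [Sym2.congr_right] at hy; exact hy
      · exact absurd (p.fst_mem_support_of_mem_edges hy) hq.2
    exact hne ((key y1 h1).trans (key y2 h2).symm)

/-- a path has at most two edges at any vertex -/
lemma no_three_edges (x : V) {u v : V} (q : T.Walk u v) (hq : q.IsPath) {y1 y2 y3 : V}
    (h12 : y1 ≠ y2) (h13 : y1 ≠ y3) (h23 : y2 ≠ y3)
    (h1 : s(x, y1) ∈ q.edges) (h2 : s(x, y2) ∈ q.edges) (h3 : s(x, y3) ∈ q.edges) : False := by
  induction q with
  | nil => simp at h1
  | @cons a b c h p ih =>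
    rw [Walk.cons_isPath_iff] at hq
    -- helper: if an edge at x is in the tail, x ∈ p.support
    have hmem : ∀ y, s(x, y) ∈ p.edges → x ∈ p.support :=
      fun y hy => p.fst_mem_support_of_mem_edges hy
    by_cases hxa : x = a
    · subst hxa
      -- all edges at x must be the head edge
      have key : ∀ y, s(x, y) ∈ (Walk.cons h p).edges → y = b := by
        intro y hy
        rw [Walk.edges_cons, List.mem_cons] at hy
        rcases hy with hy | hy
        · rw [Sym2.congr_right] at hy; exact hy
        · exact absurd (hmem y hy) hq.2
      exact h12 ((key y1 h1).trans (key y2 h2).symm)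
    · -- x ≠ a; an edge s(x,y) equals head edge s(a,b) iff x = b ∧ y = a
      have key : ∀ y, s(x, y) ∈ (Walk.cons h p).edges → (x = b ∧ y = a) ∨ s(x, y) ∈ p.edges := by
        intro y hy
        rw [Walk.edges_cons, List.mem_cons] at hy
        rcases hy with hy | hy
        · rw [Sym2.eq_iff] at hy
          rcases hy with ⟨hy1, hy2⟩ | ⟨hy1, hy2⟩
          · exact absurd hy1 hxa
          · exact Or.inl ⟨hy1, hy2⟩
        · exact Or.inr hy
      rcases key y1 h1 with ⟨hxb, hy1a⟩ | h1'
      · -- y1 = a, so y2 y3 edges are in p (they can't also equal head edge since y ≠ a... )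
        subst hxb
        rcases key y2 h2 with ⟨-, hy2a⟩ | h2'
        · exact h12 (hy1a.trans hy2a.symm)
        rcases key y3 h3 with ⟨-, hy3a⟩ | h3'
        · exact h13 (hy1a.trans hy3a.symm)
        · exact no_two_edges_at_start p hq.1 h23 h2' h3'
      rcases key y2 h2 with ⟨hxb, hy2a⟩ | h2'
      · subst hxb
        rcases key y3 h3 with ⟨-, hy3a⟩ | h3'
        · exact h23 (hy2a.trans hy3a.symm)
        · exact no_two_edges_at_start p hq.1 h13 h1' h3'
      rcases key y3 h3 with ⟨hxb, hy3a⟩ | h3'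
      · subst hxb
        exact no_two_edges_at_start p hq.1 h12 h1' h2'
      · exact ih hq.1 h1' h2' h3'


lemma adj_dist (hT : T.IsTree) (r : V) {u v : V} (ha : T.Adj u v) :
    T.dist r u + 1 = T.dist r v ∨ T.dist r v + 1 = T.dist r u := by
  haveI := Classical.decEq V
  have hc := hT.isConnected
  have huv : T.dist u v ≤ 1 := by
    have := SimpleGraph.dist_le (Walk.cons ha Walk.nil)
    simpa using this
  have hvu : T.dist v u ≤ 1 := by
    have := SimpleGraph.dist_le (Walk.cons ha.symm Walk.nil)
    simpa using this
  have h1 : T.dist r v ≤ T.dist r u + 1 :=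
    le_trans (hc.dist_triangle (v := u)) (by omega)
  have h2 : T.dist r u ≤ T.dist r v + 1 :=
    le_trans (hc.dist_triangle (v := v)) (by omega)
  have hne : T.dist r u ≠ T.dist r v := by
    intro heq
    obtain ⟨p, hp, hlen⟩ := hc.exists_path_of_dist r v
    by_cases hu : u ∈ p.support
    · have t1 : T.dist r u ≤ (p.takeUntil u hu).length := SimpleGraph.dist_le _
      have t2 : 1 ≤ (p.dropUntil u hu).length := by
        rcases Nat.eq_zero_or_pos (p.dropUntil u hu).length with h0 | h0
        · exact absurd (Walk.eq_of_length_eq_zero h0) ha.ne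
        · exact h0
      have t3 : (p.takeUntil u hu).length + (p.dropUntil u hu).length = p.length := by
        have := congrArg Walk.length (p.take_spec hu)
        rwa [Walk.length_append] at this
      omega
    · have hu' : u ∉ p.reverse.support := by
        rwa [Walk.support_reverse, List.mem_reverse]
      have hqp : ((Walk.cons ha p.reverse).reverse : T.Walk r u).IsPath := by
        apply Walk.IsPath.reverse
        rw [Walk.cons_isPath_iff]
        exact ⟨hp.reverse, hu'⟩
      obtain ⟨p', hp', hlen'⟩ := hc.exists_path_of_dist r u
      have heq2 := path_eq hT.IsAcyclic hp' hqp
      have : p'.length = T.dist r v + 1 := by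
        rw [heq2]
        simp [Walk.length_reverse, hlen]
      omega
  omega

lemma exists_parent (hT : T.IsTree) (r : V) {v : V} (hv : v ≠ r) :
    ∃ p : V, T.Adj v p ∧ T.dist r p + 1 = T.dist r v := by
  have hc := hT.isConnected
  obtain ⟨p, hp, hlen⟩ := hc.exists_path_of_dist r v
  have hvr : T.dist r v ≠ 0 := by
    simp only [ne_eq, hc.dist_eq_zero_iff]
    exact fun h => hv h.symm
  obtain ⟨z, hadj, q', hq'⟩ := Walk.exists_eq_cons_of_ne hv p.reverse
  refine ⟨z, hadj, ?_⟩
  rcases adj_dist hT r hadj with h | h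
  · exact absurd h (by
      have : T.dist r z ≤ q'.length := by
        have := SimpleGraph.dist_le q'.reverse
        rwa [Walk.length_reverse] at this
      have hq'l : q'.length + 1 = T.dist r v := by
        have := congrArg Walk.length hq'
        rw [Walk.length_reverse, hlen] at this
        simpa using this.symm
      omega)
  · exact h




lemma dist_le_of_mem_support {r x y : V} {p : T.Walk r y} (hx : x ∈ p.support) :
    T.dist r x ≤ p.length := by
  haveI := Classical.decEq V
  exact le_trans (SimpleGraph.dist_le _) (p.length_takeUntil_le hx)

lemma parent_unique (hT : T.IsTree) (r : V) {v z1 z2 : V}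
    (h1 : T.Adj v z1) (hd1 : T.dist r z1 + 1 = T.dist r v)
    (h2 : T.Adj v z2) (hd2 : T.dist r z2 + 1 = T.dist r v) : z1 = z2 := by
  have hc := hT.isConnected
  obtain ⟨p1, hp1, hl1⟩ := hc.exists_path_of_dist r z1
  obtain ⟨p2, hp2, hl2⟩ := hc.exists_path_of_dist r z2
  have hw : ∀ {z : V} (h : T.Adj v z) (p : T.Walk r z), p.IsPath → p.length = T.dist r z →
      T.dist r z + 1 = T.dist r v → (Walk.cons h p.reverse : T.Walk v r).IsPath := by
    intro z h p hp hl hd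
    rw [Walk.cons_isPath_iff]
    refine ⟨hp.reverse, ?_⟩
    rw [Walk.support_reverse, List.mem_reverse]
    intro hmem
    have := dist_le_of_mem_support hmem
    omega
  have hq1 := hw h1 p1 hp1 hl1 hd1
  have hq2 := hw h2 p2 hp2 hl2 hd2
  have heq := path_eq hT.IsAcyclic hq1 hq2
  have hs := congrArg Walk.support heq
  rw [Walk.support_cons, Walk.support_cons] at hs
  have hs2 : p1.reverse.support = p2.reverse.support := by
    exact (List.cons.injEq _ _ _ _ ▸ hs).2
  rw [Walk.support_eq_cons p1.reverse, Walk.support_eq_cons p2.reverse] at hs2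
  exact (List.cons.injEq _ _ _ _ ▸ hs2).1

open Classical in
noncomputable def par (T : SimpleGraph V) (r v : V) : V :=
  if h : ∃ p : V, T.Adj v p ∧ T.dist r p + 1 = T.dist r v then h.choose else v

lemma par_spec (hT : T.IsTree) (r : V) {v : V} (hv : v ≠ r) :
    T.Adj v (par T r v) ∧ T.dist r (par T r v) + 1 = T.dist r v := by
  rw [par]
  rw [dif_pos (exists_parent hT r hv)]
  exact (exists_parent hT r hv).choose_spec

lemma eq_par (hT : T.IsTree) (r : V) {v z : V} (h : T.Adj v z)
    (hd : T.dist r z + 1 = T.dist r v) : z = par T r v := by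
  have hv : v ≠ r := by
    intro h'
    subst h'
    rw [SimpleGraph.dist_self] at hd
    omega
  exact parent_unique hT r h hd (par_spec hT r hv).1 (par_spec hT r hv).2





/-- descending paths start by going to the parent -/
lemma par_mem_support (hT : T.IsTree) (r : V) :
    ∀ {x y : V} (p : T.Walk x y), p.IsPath → T.dist r y < T.dist r x →
      par T r x ∈ p.support := by
  intro x y p
  induction p with
  | nil => exact fun _ hd => absurd hd (lt_irrefl _)
  | @cons a b c h q ih =>
    intro hp hd
    rcases adj_dist hT r h with h1 | h2
    · -- b is deeper than a : a = par b, contradiction via IH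
      have hab : a = par T r b := eq_par hT r h.symm h1
      have hd2 : T.dist r c < T.dist r b := by omega
      have := ih hp.of_cons hd2
      rw [← hab] at this
      rw [Walk.cons_isPath_iff] at hp
      exact absurd this hp.2
    · -- b = par a
      have hb : b = par T r a := eq_par hT r h h2
      rw [Walk.support_cons, ← hb]
      exact List.mem_cons_of_mem _ q.start_mem_support

lemma par_mem_of_two (hT : T.IsTree) (r : V) {a b u v : V} {w : T.Walk a b} (hw : w.IsPath)
    (hu : u ∈ w.support) (hv : v ∈ w.support) (hd : T.dist r u < T.dist r v) :
    par T r v ∈ w.support := by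
  obtain ⟨p, hp, hsup, -⟩ := exists_subpath hw hv hu
  exact hsup _ (par_mem_support hT r p hp hd)

lemma min_unique (hT : T.IsTree) (r : V) {a0 b x m : V} {w : T.Walk a0 b} (hw : w.IsPath)
    (hm : m ∈ w.support) (hmin : ∀ z ∈ w.support, T.dist r m ≤ T.dist r z)
    (hx : x ∈ w.support) (heq : T.dist r x = T.dist r m) : x = m := by
  obtain ⟨p, hp, hsup, -⟩ := exists_subpath hw hx hm
  cases p with
  | nil => rfl
  | @cons _ z _ h q =>
    exfalso
    have hz : z ∈ w.support := hsup _ (by rw [Walk.support_cons]; exact List.mem_cons_of_mem _ q.start_mem_support)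
    rcases adj_dist hT r h with h1 | h2
    · -- z deeper than x
      have hd2 : T.dist r m < T.dist r z := by omega
      have := par_mem_support hT r q hp.of_cons hd2
      have hxz : x = par T r z := eq_par hT r h.symm h1
      rw [← hxz] at this
      rw [Walk.cons_isPath_iff] at hp
      exact hp.2 this
    · have := hmin z hz
      omega

lemma exists_child_in (hT : T.IsTree) (r : V) {a0 b x m : V} {w : T.Walk a0 b} (hw : w.IsPath)
    (hm : m ∈ w.support) (hmin : ∀ z ∈ w.support, T.dist r m ≤ T.dist r z)
    (hx : x ∈ w.support) (hne : x ≠ m) :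
    ∃ c ∈ w.support, T.Adj m c ∧ T.dist r c = T.dist r m + 1 := by
  obtain ⟨p, hp, hsup, -⟩ := exists_subpath hw hm hx
  cases p with
  | nil => exact absurd rfl hne.symm
  | @cons _ z _ h q =>
    have hz : z ∈ w.support := hsup _ (by rw [Walk.support_cons]; exact List.mem_cons_of_mem _ q.start_mem_support)
    rcases adj_dist hT r h with h1 | h2
    · exact ⟨z, hz, h, h1.symm⟩
    · have := hmin z hz
      omega

end Helpers

open SimpleGraph Walk in
set_option maxHeartbeats 1000000 in
theorem stmt14 {V : Type*} [Fintype V] (T : SimpleGraph V) (hT : T.IsTree)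
    (hn : 2 ≤ Fintype.card V) :
    T.totalForcingNumber ≤ T.matchingNumber + T.pathCoverNumber := by
  classical
  have hc := hT.isConnected
  have hneV : Nonempty V := Fintype.card_pos_iff.mp (by omega)
  obtain ⟨r⟩ := hneV
  -- a minimum path cover exists
  have hPCne : {n | ∃ P : Set (Set V), T.IsPathCover P ∧ P.ncard = n}.Nonempty := by
    refine ⟨(Set.range fun v : V => ({v} : Set V)).ncard, Set.range _, ⟨?_, ?_, ?_⟩, rfl⟩
    · rintro Q ⟨v, rfl⟩
      exact ⟨v, v, Walk.nil, Walk.IsPath.nil, by ext x; simp⟩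
    · rintro s ⟨a, rfl⟩ t ⟨b, rfl⟩ hst
      simp only [Function.onFun, id]
      rw [Set.disjoint_singleton]
      intro h; exact hst (by simp [h])
    · ext x
      simp only [Set.mem_sUnion, Set.mem_range, Set.mem_univ, iff_true]
      exact ⟨{x}, ⟨x, rfl⟩, rfl⟩
  obtain ⟨P, hP, hPcard⟩ := Nat.sInf_mem hPCne
  obtain ⟨hPpath, hPdisj, hPunion⟩ := hP
  simp only [SimpleGraph.IsPathSet] at hPpath
  choose ua va ww hwpath hwsupp using hPpath
  -- Qof : the unique cover element containing a vertex
  have hQex : ∀ v : V, ∃ Q, Q ∈ P ∧ v ∈ Q := by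
    intro v
    have : v ∈ ⋃₀ P := by rw [hPunion]; trivial
    simpa [Set.mem_sUnion] using this
  choose Qof hQofP hQofmem using hQex
  have hQof_eq : ∀ {Q} (_ : Q ∈ P) {x}, x ∈ Q → Qof x = Q := by
    intro Q hQ x hx
    by_contra hne
    have := hPdisj (hQofP x) hQ hne
    exact Set.disjoint_left.mp this (hQofmem x) hx
  -- membership in Q vs walk support
  have hQsup : ∀ {Q} (hQ : Q ∈ P) {x}, x ∈ Q ↔ x ∈ (ww Q hQ).support := by
    intro Q hQ x
    conv_lhs => rw [← hwsupp Q hQ]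
    rfl
  -- apex : min-depth vertex of each Q
  have hapxex : ∀ Q : Set V, ∃ a, Q ∈ P → (a ∈ Q ∧ ∀ b ∈ Q, T.dist r a ≤ T.dist r b) := by
    intro Q
    by_cases hQ : Q ∈ P
    · have hne : Q.Nonempty := ⟨ua Q hQ, (hQsup hQ).mpr (ww Q hQ).start_mem_support⟩
      obtain ⟨a, ha, hmin⟩ := Set.exists_min_image Q (fun v => T.dist r v) (Set.toFinite Q) hne
      exact ⟨a, fun _ => ⟨ha, hmin⟩⟩
    · exact ⟨r, fun h => absurd h hQ⟩
  choose apx hapx using hapxex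
  -- strict minimality
  have F2 : ∀ {Q} (hQ : Q ∈ P) {x}, x ∈ Q → x ≠ apx Q → T.dist r (apx Q) < T.dist r x := by
    intro Q hQ x hx hne
    rcases lt_or_eq_of_le ((hapx Q hQ).2 x hx) with h | h
    · exact h
    · exact absurd (min_unique hT r (hwpath Q hQ) ((hQsup hQ).mp (hapx Q hQ).1)
        (fun z hz => (hapx Q hQ).2 z ((hQsup hQ).mpr hz)) ((hQsup hQ).mp hx) h.symm) hne
  -- non-apex vertices have their parent inside their path
  have F3 : ∀ {Q} (hQ : Q ∈ P) {x}, x ∈ Q → x ≠ apx Q → par T r x ∈ Q ∧ x ≠ r := by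
    intro Q hQ x hx hne
    have hlt := F2 hQ hx hne
    constructor
    · exact (hQsup hQ).mpr (par_mem_of_two hT r (hwpath Q hQ) ((hQsup hQ).mp (hapx Q hQ).1)
        ((hQsup hQ).mp hx) hlt)
    · intro h
      rw [h, SimpleGraph.dist_self] at hlt
      omega
  -- a child outside one's own path is the apex of its path
  have F4 : ∀ {Q} (hQ : Q ∈ P) {x}, x ∈ Q → ∀ {c}, T.Adj x c →
      T.dist r c = T.dist r x + 1 → c ∉ Q → c = apx (Qof c) := by
    intro Q hQ x hx c hadj hdc hcQ
    by_contra hca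
    have h3 := F3 (hQofP c) (hQofmem c) hca
    have hpc : par T r c = x := (eq_par hT r hadj.symm (by omega)).symm
    rw [hpc] at h3
    have : Qof c = Q := by
      rw [← hQof_eq (hQofP c) h3.1, hQof_eq hQ hx]
    exact hcQ (this ▸ hQofmem c)
  -- no vertex has three neighbours within its own path
  have F5 : ∀ {Q} (hQ : Q ∈ P) {x y1 y2 y3 : V}, x ∈ Q → y1 ∈ Q → y2 ∈ Q → y3 ∈ Q →
      T.Adj x y1 → T.Adj x y2 → T.Adj x y3 → y1 ≠ y2 → y1 ≠ y3 → y2 ≠ y3 → False := by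
    intro Q hQ x y1 y2 y3 hx h1 h2 h3 a1 a2 a3 n12 n13 n23
    exact no_three_edges x (ww Q hQ) (hwpath Q hQ) n12 n13 n23
      (edge_mem_of_adj hT.IsAcyclic (hwpath Q hQ) ((hQsup hQ).mp hx) ((hQsup hQ).mp h1) a1)
      (edge_mem_of_adj hT.IsAcyclic (hwpath Q hQ) ((hQsup hQ).mp hx) ((hQsup hQ).mp h2) a2)
      (edge_mem_of_adj hT.IsAcyclic (hwpath Q hQ) ((hQsup hQ).mp hx) ((hQsup hQ).mp h3) a3)
  -- designated child of the apex in each non-singleton path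
  have hdsgex : ∀ Q : Set V, ∃ c, (Q ∈ P ∧ ∃ x ∈ Q, x ≠ apx Q) →
      (c ∈ Q ∧ T.Adj (apx Q) c ∧ T.dist r c = T.dist r (apx Q) + 1) := by
    intro Q
    by_cases h : Q ∈ P ∧ ∃ x ∈ Q, x ≠ apx Q
    · obtain ⟨hQ, x, hx, hxa⟩ := h
      obtain ⟨c, hc, hadj, hdc⟩ := exists_child_in hT r (hwpath Q hQ)
        ((hQsup hQ).mp (hapx Q hQ).1) (fun z hz => (hapx Q hQ).2 z ((hQsup hQ).mpr hz))
        ((hQsup hQ).mp hx) hxa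
      exact ⟨c, fun _ => ⟨(hQsup hQ).mpr hc, hadj, hdc⟩⟩
    · exact ⟨r, fun h' => absurd h' h⟩
  choose dsg hdsg using hdsgex
  -- bad singleton leaves
  set bad : V → Prop := fun v => {v} ∈ P ∧ (∀ c, ¬(T.Adj v c ∧ T.dist r c = T.dist r v + 1)) ∧
      v ≠ r ∧ par T r v ≠ apx (Qof (par T r v)) with hbaddef
  set Pbig : Set (Set V) := {Q | Q ∈ P ∧ ∃ x ∈ Q, x ≠ apx Q} with hPbigdef
  set A : Set V := apx '' P with hAdef
  set D : Set V := dsg '' Pbig with hDdef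
  set B : Set V := (par T r) '' {v | bad v} with hBdef
  set S : Set V := A ∪ (D ∪ B) with hSdef
  -- basic facts
  have hsingapx : ∀ {u : V}, ({u} : Set V) ∈ P → apx {u} = u := by
    intro u hu
    have := (hapx _ hu).1
    simpa using this
  have hQof_par : ∀ {v : V}, bad v → Qof v = {v} := by
    intro v hv
    exact hQof_eq hv.1 rfl
  have hrA : r ∈ A := by
    have h0 : T.dist r (apx (Qof r)) = 0 := by
      have := (hapx _ (hQofP r)).2 r (hQofmem r)
      rw [SimpleGraph.dist_self] at this
      omega
    have : apx (Qof r) = r := (hc.dist_eq_zero_iff.mp h0).symm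
    exact ⟨Qof r, hQofP r, this⟩
  -- THE FORCING PROCESS COLORS EVERYTHING
  have hforce : ∀ n : ℕ, ∀ v : V, T.dist r v ≤ n → T.Forced S v := by
    intro n
    induction n with
    | zero =>
      intro v hv
      have : r = v := hc.dist_eq_zero_iff.mp (Nat.le_zero.mp hv)
      exact .init v (this ▸ Or.inl hrA)
    | succ n ih =>
      intro v hv
      by_cases hvS : v ∈ S
      · exact .init v hvS
      have hva : v ≠ apx (Qof v) := by
        intro h
        exact hvS (Or.inl ⟨Qof v, hQofP v, h.symm⟩)
      obtain ⟨hparQ, hvr⟩ := F3 (hQofP v) (hQofmem v) hva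
      obtain ⟨hadjp, hdp⟩ := par_spec hT r hvr
      set x := par T r v with hxdef
      have hdx : T.dist r x + 1 = T.dist r v := hdp
      refine SimpleGraph.Forced.force x v (ih x (by omega)) hadjp.symm ?_
      intro z hz hzv
      rcases adj_dist hT r hz with h1 | h2
      · -- z is a child of x
        by_cases hzQ : z ∈ Qof v
        · -- v and z both children of x inside Qof v : x is the apex, z is designated
          have hxQv : Qof x = Qof v := hQof_eq (hQofP v) hparQ
          have hxapx : x = apx (Qof v) := by
            by_contra hxa
            obtain ⟨hppQ, hxr⟩ := F3 (hQofP v) hparQ hxa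
            obtain ⟨hadjpp, hdpp⟩ := par_spec hT r hxr
            refine F5 (hQofP v) hparQ (hQofmem v) hzQ hppQ hadjp.symm hz hadjpp
              (Ne.symm hzv) ?_ ?_
            · intro h; rw [← h] at hdpp; omega
            · intro h; rw [← h] at hdpp; omega
          have hbig : Qof v ∈ Pbig := ⟨hQofP v, v, hQofmem v, hva⟩
          obtain ⟨hdmem, hdadj, hddist⟩ := hdsg (Qof v) ⟨hQofP v, v, hQofmem v, hva⟩
          have hdv : dsg (Qof v) ≠ v := by
            intro h
            exact hvS (Or.inr (Or.inl ⟨Qof v, hbig, h⟩))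
          have hdz : dsg (Qof v) = z := by
            by_contra hdz
            refine F5 (hQofP v) hparQ (hQofmem v) hzQ hdmem hadjp.symm hz ?_
              (Ne.symm hzv) (Ne.symm hdv) (Ne.symm hdz)
            rw [← hxapx] at hdadj
            exact hdadj
          exact .init z (Or.inr (Or.inl ⟨Qof v, hbig, hdz⟩))
        · -- z is the apex of its own path
          have hxQv : x ∈ Qof v := hparQ
          have := F4 (hQofP v) hxQv hz (by omega) hzQ
          exact .init z (Or.inl ⟨Qof z, hQofP z, this.symm⟩)
      · -- z is the parent of x
        exact ih z (by omega)
  -- the root has a child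
  have hrchild : ∃ c, T.Adj r c := by
    obtain ⟨w0, hw0⟩ := Fintype.exists_ne_of_one_lt_card (by omega) r
    obtain ⟨p, hp, hlen⟩ := hc.exists_path_of_dist r w0
    obtain ⟨z, hadj, q, hq⟩ := Walk.exists_eq_cons_of_ne (Ne.symm hw0) p
    exact ⟨z, hadj⟩
  -- TOTALITY
  have htot : ∀ v ∈ S, ∃ u ∈ S, T.Adj v u := by
    rintro v (⟨Q, hQ, rfl⟩ | ⟨Q, hQbig, rfl⟩ | ⟨u, hu, rfl⟩)
    · -- v = apx Q
      by_cases hbigQ : ∃ x ∈ Q, x ≠ apx Q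
      · obtain ⟨hdmem, hdadj, hddist⟩ := hdsg Q ⟨hQ, hbigQ⟩
        exact ⟨dsg Q, Or.inr (Or.inl ⟨Q, ⟨hQ, hbigQ⟩, rfl⟩), hdadj⟩
      · -- Q is the singleton {apx Q}
        push_neg at hbigQ
        have hQsing : Q = {apx Q} := by
          apply Set.eq_singleton_iff_unique_mem.mpr
          exact ⟨(hapx Q hQ).1, fun x hx => hbigQ x hx⟩
        by_cases hchild : ∃ c, T.Adj (apx Q) c ∧ T.dist r c = T.dist r (apx Q) + 1
        · obtain ⟨c, hcadj, hcd⟩ := hchild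
          have hcQ : c ∉ Q := by
            rw [hQsing]
            intro h
            rw [Set.mem_singleton_iff] at h
            rw [h] at hcd
            omega
          have := F4 hQ (hapx Q hQ).1 hcadj hcd hcQ
          exact ⟨c, Or.inl ⟨Qof c, hQofP c, this.symm⟩, hcadj⟩
        · -- childless
          have hvr : apx Q ≠ r := by
            intro h
            obtain ⟨c, hcadj⟩ := hrchild
            rcases adj_dist hT r hcadj with h1 | h2
            · exact hchild ⟨c, h ▸ hcadj, by rw [h, SimpleGraph.dist_self]; rw [SimpleGraph.dist_self] at h1; omega⟩
            · rw [SimpleGraph.dist_self] at h2; omega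
          obtain ⟨hpadj, hpd⟩ := par_spec hT r hvr
          by_cases hpx : par T r (apx Q) = apx (Qof (par T r (apx Q)))
          · exact ⟨par T r (apx Q), Or.inl ⟨Qof (par T r (apx Q)), hQofP _, hpx.symm⟩, hpadj⟩
          · have hbadv : bad (apx Q) := by
              rw [hbaddef]
              refine ⟨hQsing ▸ hQ, ?_, hvr, hpx⟩
              intro c hcc
              exact hchild ⟨c, hcc.1, hcc.2⟩
            exact ⟨par T r (apx Q), Or.inr (Or.inr ⟨apx Q, hbadv, rfl⟩), hpadj⟩
    · -- v = dsg Q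
      obtain ⟨hdmem, hdadj, hddist⟩ := hdsg Q hQbig
      exact ⟨apx Q, Or.inl ⟨Q, hQbig.1, rfl⟩, hdadj.symm⟩
    · -- v = par T r u, u bad
      have huA : u ∈ A := by
        have h1 : Qof u = {u} := hQof_par hu
        have h2 : apx (Qof u) = u := by rw [h1]; exact hsingapx (h1 ▸ hQofP u)
        exact ⟨Qof u, hQofP u, h2⟩
      exact ⟨u, Or.inl huA, (par_spec hT r hu.2.2.1).1.symm⟩
  -- THE MATCHING
  set mate : V → V := fun x =>
    if h : ∃ u, bad u ∧ par T r u = x then h.choose else apx (Qof x) with hmatedef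
  have hmateB : ∀ x, (h : ∃ u, bad u ∧ par T r u = x) → bad (mate x) ∧ par T r (mate x) = x := by
    intro x h
    rw [hmatedef]
    simp only [dif_pos h]
    exact h.choose_spec
  have hmateD : ∀ x, ¬(∃ u, bad u ∧ par T r u = x) → mate x = apx (Qof x) := by
    intro x h
    rw [hmatedef]
    simp only [dif_neg h]
  have hBmem : ∀ {x}, x ∈ B ↔ ∃ u, bad u ∧ par T r u = x := by
    intro x
    constructor
    · rintro ⟨u, hu, rfl⟩; exact ⟨u, hu, rfl⟩
    · rintro ⟨u, hu, h⟩; exact ⟨u, hu, h⟩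
  have hD_eq : ∀ {x}, x ∈ D → x = dsg (Qof x) ∧ Qof x ∈ Pbig ∧ T.Adj (apx (Qof x)) x ∧
      T.dist r x = T.dist r (apx (Qof x)) + 1 := by
    rintro x ⟨Q, hQb, rfl⟩
    obtain ⟨hm, hadj, hdist⟩ := hdsg Q hQb
    have hq : Qof (dsg Q) = Q := hQof_eq hQb.1 hm
    rw [hq]
    exact ⟨rfl, hQb, hadj, hdist⟩
  have hapx_not : ∀ z : V, apx (Qof z) ∉ D ∪ B := by
    intro z h
    have hamem : apx (Qof z) ∈ Qof z := (hapx (Qof z) (hQofP z)).1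
    have haq : Qof (apx (Qof z)) = Qof z := hQof_eq (hQofP z) hamem
    rcases h with hD | hB
    · obtain ⟨heq, hQb, hadj, hdist⟩ := hD_eq hD
      rw [haq] at hdist
      omega
    · obtain ⟨u, hu, hEq⟩ := hBmem.mp hB
      apply hu.2.2.2
      rw [hEq, haq]
  have hbad_not : ∀ u, bad u → u ∉ D ∪ B := by
    intro u hu h
    rcases h with hD | hB
    · obtain ⟨heq, hQb, hadj, hdist⟩ := hD_eq hD
      have h1 : Qof u = {u} := hQof_par hu
      rw [h1] at hQb
      obtain ⟨-, x, hx, hxa⟩ := hQb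
      rw [Set.mem_singleton_iff] at hx
      rw [hx] at hxa
      exact hxa (hsingapx (h1 ▸ hQofP u)).symm
    · obtain ⟨u', hu', hEq⟩ := hBmem.mp hB
      obtain ⟨hadj, hdist⟩ := par_spec hT r hu'.2.2.1
      rw [hEq] at hadj hdist
      exact hu.2.1 u' ⟨hadj.symm, by omega⟩
  have hmate_not : ∀ x ∈ D ∪ B, mate x ∉ D ∪ B ∧ T.Adj x (mate x) := by
    intro x hx
    by_cases hBx : ∃ u, bad u ∧ par T r u = x
    · obtain ⟨hb, hp⟩ := hmateB x hBx
      refine ⟨hbad_not _ hb, ?_⟩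
      have := (par_spec hT r hb.2.2.1).1
      rw [hp] at this
      exact this.symm
    · have hxD : x ∈ D := by
        rcases hx with hD | hB
        · exact hD
        · exact absurd (hBmem.mp hB) hBx
      rw [hmateD x hBx]
      exact ⟨hapx_not x, (hD_eq hxD).2.2.1.symm⟩
  have hpair : ∀ x ∈ D ∪ B, ∀ y ∈ D ∪ B, x ≠ y → mate x ≠ mate y := by
    intro x hx y hy hxy heq
    by_cases hBx : ∃ u, bad u ∧ par T r u = x <;>
      by_cases hBy : ∃ u, bad u ∧ par T r u = y
    · obtain ⟨hbx, hpx⟩ := hmateB x hBx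
      obtain ⟨hby, hpy⟩ := hmateB y hBy
      exact hxy (by rw [← hpx, heq, hpy])
    · obtain ⟨hbx, hpx⟩ := hmateB x hBx
      rw [hmateD y hBy] at heq
      have hmm : mate x ∈ Qof y := heq ▸ (hapx (Qof y) (hQofP y)).1
      have h1 : Qof (mate x) = {mate x} := hQof_par hbx
      have h2 : Qof (mate x) = Qof y := hQof_eq (hQofP y) hmm
      have : y ∈ ({mate x} : Set V) := by rw [← h1, h2]; exact hQofmem y
      rw [Set.mem_singleton_iff] at this
      exact hbad_not _ hbx (this ▸ hy)
    · obtain ⟨hby, hpy⟩ := hmateB y hBy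
      rw [hmateD x hBx] at heq
      have hmm : mate y ∈ Qof x := heq ▸ (hapx (Qof x) (hQofP x)).1
      have h1 : Qof (mate y) = {mate y} := hQof_par hby
      have h2 : Qof (mate y) = Qof x := hQof_eq (hQofP x) hmm
      have : x ∈ ({mate y} : Set V) := by rw [← h1, h2]; exact hQofmem x
      rw [Set.mem_singleton_iff] at this
      exact hbad_not _ hby (this ▸ hx)
    · rw [hmateD x hBx, hmateD y hBy] at heq
      have hxD : x ∈ D := by
        rcases hx with h | h
        · exact h
        · exact absurd (hBmem.mp h) hBx
      have hyD : y ∈ D := by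
        rcases hy with h | h
        · exact h
        · exact absurd (hBmem.mp h) hBy
      have hax : apx (Qof x) ∈ Qof x := (hapx (Qof x) (hQofP x)).1
      have hay : apx (Qof x) ∈ Qof y := heq ▸ (hapx (Qof y) (hQofP y)).1
      have hQeq : Qof x = Qof y := by
        rw [← hQof_eq (hQofP x) hax, hQof_eq (hQofP y) hay]
      apply hxy
      rw [(hD_eq hxD).1, (hD_eq hyD).1, hQeq]
  set M : T.Subgraph :=
    { verts := {a | ∃ x ∈ D ∪ B, a = x ∨ a = mate x},
      Adj := fun a b => ∃ x ∈ D ∪ B, (a = x ∧ b = mate x) ∨ (b = x ∧ a = mate x),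
      adj_sub := by
        rintro a b ⟨x, hx, ⟨h1, h2⟩ | ⟨h1, h2⟩⟩
        · rw [h1, h2]; exact (hmate_not _ hx).2
        · rw [h1, h2]; exact (hmate_not _ hx).2.symm
      edge_vert := by
        rintro a b ⟨x, hx, ⟨h1, h2⟩ | ⟨h1, h2⟩⟩
        · exact ⟨x, hx, Or.inl h1⟩
        · exact ⟨x, hx, Or.inr h2⟩
      symm := by
        constructor
        rintro a b ⟨x, hx, ⟨h1, h2⟩ | ⟨h1, h2⟩⟩
        · exact ⟨x, hx, Or.inr ⟨h1, h2⟩⟩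
        · exact ⟨x, hx, Or.inl ⟨h1, h2⟩⟩ } with hMdef
  have hM : M.IsMatching := by
    rintro v ⟨x, hx, hv⟩
    rcases hv with h | h
    · refine ⟨mate x, ⟨x, hx, Or.inl ⟨h, rfl⟩⟩, ?_⟩
      rintro w ⟨y, hy, ⟨hy1, hy2⟩ | ⟨hy1, hy2⟩⟩
      · have hyx : y = x := hy1.symm.trans h
        rw [hy2, hyx]
      · have hmem : mate y ∈ D ∪ B := by rw [hy2.symm.trans h]; exact hx
        exact absurd hmem (hmate_not y hy).1
    · refine ⟨x, ⟨x, hx, Or.inr ⟨rfl, h⟩⟩, ?_⟩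
      rintro w ⟨y, hy, ⟨hy1, hy2⟩ | ⟨hy1, hy2⟩⟩
      · have hmem : mate x ∈ D ∪ B := by rw [h.symm.trans hy1]; exact hy
        exact absurd hmem (hmate_not x hx).1
      · by_cases hxy : x = y
        · rw [hy1, hxy]
        · exact absurd (h.symm.trans hy2) (hpair x hx y hy hxy)
  have hedgesub : (fun x => s(x, mate x)) '' (D ∪ B) ⊆ M.edgeSet := by
    rintro e ⟨x, hx, rfl⟩
    exact ⟨x, hx, Or.inl ⟨rfl, rfl⟩⟩
  have hinj : Set.InjOn (fun x => s(x, mate x)) (D ∪ B) := by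
    intro x hx y hy h
    simp only [Sym2.eq_iff] at h
    rcases h with ⟨h1, h2⟩ | ⟨h1, h2⟩
    · exact h1
    · have hmem : mate y ∈ D ∪ B := by rw [← h1]; exact hx
      exact absurd hmem (hmate_not y hy).1
  have hDB_le : (D ∪ B).ncard ≤ M.edgeSet.ncard := by
    rw [← Set.ncard_image_of_injOn hinj]
    exact Set.ncard_le_ncard hedgesub (Set.toFinite _)
  -- FINAL COUNTING
  have hS_le : S.ncard ≤ P.ncard + (D ∪ B).ncard := by
    refine le_trans (Set.ncard_union_le _ _) ?_
    exact Nat.add_le_add_right (Set.ncard_image_le (Set.toFinite P)) _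
  have h1 : T.totalForcingNumber ≤ S.ncard :=
    Nat.sInf_le ⟨S, ⟨fun v => hforce _ v le_rfl, htot⟩, rfl⟩
  have hbdd : BddAbove {n | ∃ M' : T.Subgraph, M'.IsMatching ∧ M'.edgeSet.ncard = n} := by
    refine ⟨(Set.univ : Set (Sym2 V)).ncard, ?_⟩
    rintro n ⟨M', -, rfl⟩
    exact Set.ncard_le_ncard (Set.subset_univ _) Set.finite_univ
  have h2 : M.edgeSet.ncard ≤ T.matchingNumber := le_csSup hbdd ⟨M, hM, rfl⟩
  have h3 : P.ncard = T.pathCoverNumber := hPcard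
  omega
end

section
/- Let T be obtained from a tree T' by attaching at least two pendant leaves to each vertex of a set A ⊆ V(T'), where either A = V(T') or V(T') \ A is an independent set of T' containing no leaf of T'. Then the matching number of T equals |A|. -/
/-- The tree obtained from `T'` by attaching `m a` pendant leaves to each vertex `a ∈ A`. -/
def attachLeaves {V : Type*} (T : SimpleGraph V) (A : Finset V) (m : V → ℕ) :
    SimpleGraph (V ⊕ (Σ a : {x : V // x ∈ A}, Fin (m a.1))) :=
  SimpleGraph.fromRel (fun x y =>
    match x, y with
    | Sum.inl a, Sum.inl b => T.Adj a b
    | Sum.inl a, Sum.inr p => p.1.1 = a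
    | _, _ => False)

private lemma attachLeaves_cover {V : Type*} [Fintype V] [DecidableEq V] (T : SimpleGraph V)
    (A : Finset V) (m : V → ℕ)
    (hA : (A : Set V) = Set.univ ∨
      ((∀ x ∉ A, ∀ y ∉ A, ¬ T.Adj x y) ∧ ∀ x ∉ A, ¬ T.IsLeaf x))
    {x y : V ⊕ (Σ a : {x : V // x ∈ A}, Fin (m a.1))}
    (h : (attachLeaves T A m).Adj x y) : ∃ a ∈ A, x = Sum.inl a ∨ y = Sum.inl a := by
  rw [attachLeaves, SimpleGraph.fromRel_adj] at h
  obtain ⟨hne, hr⟩ := h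
  match x, y with
  | Sum.inl a, Sum.inl b =>
    have hadj : T.Adj a b := by
      rcases hr with h | h
      · exact h
      · exact h.symm
    rcases hA with hA | ⟨hind, _⟩
    · refine ⟨a, ?_, Or.inl rfl⟩
      have : a ∈ (A : Set V) := hA ▸ Set.mem_univ a
      exact this
    · by_cases ha : a ∈ A
      · exact ⟨a, ha, Or.inl rfl⟩
      · by_cases hb : b ∈ A
        · exact ⟨b, hb, Or.inr rfl⟩
        · exact absurd hadj (hind a ha b hb)
  | Sum.inl a, Sum.inr p =>
    have : p.1.1 = a := by
      rcases hr with h | h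
      · exact h
      · exact h.elim
    exact ⟨a, this ▸ p.1.2, Or.inl rfl⟩
  | Sum.inr p, Sum.inl a =>
    have : p.1.1 = a := by
      rcases hr with h | h
      · exact h.elim
      · exact h
    exact ⟨a, this ▸ p.1.2, Or.inr rfl⟩
  | Sum.inr p, Sum.inr q =>
    rcases hr with h | h
    · exact h.elim
    · exact h.elim

theorem stmt15 {V : Type*} [Fintype V] [DecidableEq V] (T : SimpleGraph V)
    (hT : T.IsTree) (A : Finset V) (m : V → ℕ) (hm : ∀ a ∈ A, 2 ≤ m a)
    (hA : (A : Set V) = Set.univ ∨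
      ((∀ x ∉ A, ∀ y ∉ A, ¬ T.Adj x y) ∧ ∀ x ∉ A, ¬ T.IsLeaf x)) :
    (attachLeaves T A m).matchingNumber = A.card := by
  classical
  set W := V ⊕ (Σ a : {x : V // x ∈ A}, Fin (m a.1)) with hW
  set G := attachLeaves T A m with hG
  -- the first pendant leaf of a
  have hpos : ∀ a (h : a ∈ A), 0 < m a := fun a h => lt_of_lt_of_le (by norm_num) (hm a h)
  let leaf0 : ∀ a : V, a ∈ A → W := fun a h => Sum.inr ⟨⟨a, h⟩, ⟨0, hpos a h⟩⟩
  have hleafne : ∀ (a a' : V) (h' : a' ∈ A), (Sum.inl a : W) ≠ leaf0 a' h' := by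
    intro a a' h'
    simp [leaf0]
  have hGadj : ∀ a (h : a ∈ A), G.Adj (Sum.inl a) (leaf0 a h) := by
    intro a h
    rw [hG, attachLeaves, SimpleGraph.fromRel_adj]
    exact ⟨hleafne a a h, Or.inl rfl⟩
  have hleaf_inj : ∀ a (h : a ∈ A) a' (h' : a' ∈ A), leaf0 a h = leaf0 a' h' → a = a' := by
    intro a h a' h' heq
    simpa [leaf0] using congrArg (fun x => match x with
      | Sum.inl v => v
      | Sum.inr p => p.1.1) heq
  -- The explicit matching
  let M : G.Subgraph :=
    { verts := {x | ∃ a, ∃ h : a ∈ A, x = Sum.inl a ∨ x = leaf0 a h}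
      Adj := fun x y => ∃ a, ∃ h : a ∈ A,
        (x = Sum.inl a ∧ y = leaf0 a h) ∨ (x = leaf0 a h ∧ y = Sum.inl a)
      adj_sub := by
        rintro x y ⟨a, h, ⟨rfl, rfl⟩ | ⟨rfl, rfl⟩⟩
        · exact hGadj a h
        · exact (hGadj a h).symm
      edge_vert := by
        rintro x y ⟨a, h, ⟨rfl, rfl⟩ | ⟨rfl, rfl⟩⟩
        · exact ⟨a, h, Or.inl rfl⟩
        · exact ⟨a, h, Or.inr rfl⟩
      symm := by
        constructor
        rintro x y ⟨a, h, ⟨rfl, rfl⟩ | ⟨rfl, rfl⟩⟩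
        · exact ⟨a, h, Or.inr ⟨rfl, rfl⟩⟩
        · exact ⟨a, h, Or.inl ⟨rfl, rfl⟩⟩ }
  have hMmatch : M.IsMatching := by
    rintro v ⟨a, h, rfl | rfl⟩
    · refine ⟨leaf0 a h, ⟨a, h, Or.inl ⟨rfl, rfl⟩⟩, ?_⟩
      rintro y ⟨a', h', ⟨ha', rfl⟩ | ⟨ha', rfl⟩⟩
      · have : a = a' := Sum.inl.inj ha'
        subst this; rfl
      · exact absurd ha' (hleafne a a' h')
    · refine ⟨Sum.inl a, ⟨a, h, Or.inr ⟨rfl, rfl⟩⟩, ?_⟩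
      rintro y ⟨a', h', ⟨ha', rfl⟩ | ⟨ha', rfl⟩⟩
      · exact absurd ha'.symm (hleafne a' a h)
      · have : a = a' := hleaf_inj a h a' h' ha'
        subst this; rfl
  -- edge set of M has cardinality A.card
  let f : V → Sym2 W := fun a =>
    if h : a ∈ A then s(Sum.inl a, leaf0 a h) else s(Sum.inl a, Sum.inl a)
  have hMedge : M.edgeSet = f '' (A : Set V) := by
    ext e
    refine e.ind (fun x y => ?_)
    simp only [SimpleGraph.Subgraph.mem_edgeSet]
    constructor
    · rintro ⟨a, h, ⟨rfl, rfl⟩ | ⟨rfl, rfl⟩⟩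
      · exact ⟨a, h, by simp [f, h]⟩
      · exact ⟨a, h, by simp [f, h, Sym2.eq_swap]⟩
    · rintro ⟨a, ha, heq⟩
      have haA : a ∈ A := ha
      simp only [f] at heq
      rw [dif_pos haA, Sym2.eq_iff] at heq
      rcases heq with ⟨h1, h2⟩ | ⟨h1, h2⟩
      · exact ⟨a, haA, Or.inl ⟨h1.symm, h2.symm⟩⟩
      · exact ⟨a, haA, Or.inr ⟨h2.symm, h1.symm⟩⟩
  have hfinj : Set.InjOn f (A : Set V) := by
    intro a ha a' ha' heq
    have haA : a ∈ A := ha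
    have haA' : a' ∈ A := ha'
    simp only [f] at heq
    rw [dif_pos haA, dif_pos haA', Sym2.eq_iff] at heq
    rcases heq with ⟨h1, _⟩ | ⟨h1, h2⟩
    · exact Sum.inl.inj h1
    · exact absurd h2.symm (hleafne a' a haA)
  have hcard : M.edgeSet.ncard = A.card := by
    rw [hMedge, Set.ncard_image_of_injOn hfinj, Set.ncard_coe_finset]
  -- membership in the sSup set
  have hmem : A.card ∈ {n | ∃ M : G.Subgraph, M.IsMatching ∧ M.edgeSet.ncard = n} :=
    ⟨M, hMmatch, hcard⟩
  -- upper bound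
  have hub : ∀ n ∈ {n | ∃ M : G.Subgraph, M.IsMatching ∧ M.edgeSet.ncard = n}, n ≤ A.card := by
    rintro n ⟨N, hN, rfl⟩
    -- every edge of N contains some Sum.inl a with a ∈ A
    have hcov : ∀ e ∈ N.edgeSet, ∃ a ∈ A, Sum.inl a ∈ e := by
      intro e he
      induction e using Sym2.ind with
      | _ x y =>
        rw [SimpleGraph.Subgraph.mem_edgeSet] at he
        obtain ⟨a, ha, h | h⟩ := attachLeaves_cover T A m hA (N.adj_sub he)
        · exact ⟨a, ha, by rw [h] at *; exact Sym2.mem_mk_left _ _⟩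
        · exact ⟨a, ha, by rw [h] at *; exact Sym2.mem_mk_right _ _⟩
    rcases Set.eq_empty_or_nonempty N.edgeSet with hemp | ⟨e0, he0⟩
    · simp [hemp]
    · obtain ⟨a0, ha0, _⟩ := hcov e0 he0
      let g : Sym2 W → V := fun e =>
        if h : ∃ a ∈ A, Sum.inl a ∈ e then h.choose else a0
      have hg : ∀ e ∈ N.edgeSet, g e ∈ A ∧ Sum.inl (g e) ∈ e := by
        intro e he
        have h := hcov e he
        simp only [g, dif_pos h]
        exact ⟨h.choose_spec.1, h.choose_spec.2⟩
      have hle := Set.ncard_le_ncard_of_injOn (t := (A : Set V)) g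
        (fun e he => (hg e he).1) ?_ (Set.toFinite _)
      · rwa [Set.ncard_coe_finset] at hle
      intro e he e' he' heq
      obtain ⟨_, hmem1⟩ := hg e he
      obtain ⟨_, hmem2⟩ := hg e' he'
      rw [heq] at hmem1
      set v := Sum.inl (g e') with hv
      -- e and e' both contain v; both are matching edges
      have key : ∀ d ∈ N.edgeSet, v ∈ d → ∃ b, N.Adj v b ∧ d = s(v, b) := by
        intro d hd hvd
        induction d using Sym2.ind with
        | _ x y =>
          rw [SimpleGraph.Subgraph.mem_edgeSet] at hd
          rw [Sym2.mem_iff] at hvd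
          rcases hvd with rfl | rfl
          · exact ⟨y, hd, rfl⟩
          · exact ⟨x, hd.symm, Sym2.eq_swap⟩
      obtain ⟨b, hb, hbe⟩ := key e he hmem1
      obtain ⟨b', hb', hbe'⟩ := key e' he' hmem2
      obtain ⟨w, -, huniq⟩ := hN (N.edge_vert hb)
      rw [hbe, hbe', huniq b hb, huniq b' hb']
  -- conclude
  rw [SimpleGraph.matchingNumber]
  exact le_antisymm (csSup_le ⟨A.card, hmem⟩ hub) (le_csSup ⟨A.card, hub⟩ hmem)
end

section
/- Let r ≥ 3 and s ≥ 1, and let T be obtained from a path on s+1 vertices by attaching r pendant leaves to one endpoint and two pendant leaves to each of the other s vertices. Then pc(T) = r − 1 + s and F_t(T) = r + 2s. -/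
namespace Aux
open SimpleGraph

variable (r s : ℕ)

abbrev Sg := (Σ a : {x : Fin (s+1) // x ∈ (Finset.univ : Finset (Fin (s+1)))}, Fin (if a.1 = 0 then r else 2))

abbrev VV := (Fin (s+1)) ⊕ Sg r s

abbrev GG : SimpleGraph (VV r s) := attachLeaves (SimpleGraph.pathGraph (s + 1)) Finset.univ (fun i => if i = 0 then r else 2)

variable {r s}

def lf (a : Fin (s+1)) (j : ℕ) (h : j < if a = 0 then r else 2) : Sg r s :=
  ⟨⟨a, Finset.mem_univ a⟩, ⟨j, h⟩⟩

lemma adj_ll {a b : Fin (s+1)} : (GG r s).Adj (Sum.inl a) (Sum.inl b) ↔ (SimpleGraph.pathGraph (s+1)).Adj a b := by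
  constructor
  · rintro ⟨hne, h | h⟩
    · exact h
    · exact h.symm
  · intro h
    exact ⟨by simp [h.ne], Or.inl h⟩

lemma adj_lr {a : Fin (s+1)} {p : Sg r s} :
    (GG r s).Adj (Sum.inl a) (Sum.inr p) ↔ p.1.1 = a := by
  constructor
  · rintro ⟨hne, h | h⟩
    · exact h
    · exact h.elim
  · intro h
    exact ⟨by simp, Or.inl h⟩

lemma adj_rr {p q : Sg r s} : ¬ (GG r s).Adj (Sum.inr p) (Sum.inr q) := by
  rintro ⟨hne, h | h⟩ <;> exact h

lemma adj_rl {a : Fin (s+1)} {p : Sg r s} :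
    (GG r s).Adj (Sum.inr p) (Sum.inl a) ↔ p.1.1 = a := by
  rw [SimpleGraph.adj_comm]; exact adj_lr

lemma sum_m : ∑ i : Fin (s+1), (if i = 0 then r else 2) = r + 2*s := by
  rw [Finset.sum_eq_sum_sdiff_singleton_add (Finset.mem_univ (0 : Fin (s+1)))]
  rw [Finset.sum_congr rfl (fun i hi => if_neg (by simp at hi; exact hi))]
  rw [Finset.sum_const, Finset.card_sdiff_of_subset (by simp)]
  simp [if_pos rfl, mul_comm]
  ring

lemma card_Sg : Fintype.card (Sg r s) = r + 2*s := by
  rw [Fintype.card_sigma]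
  rw [Fintype.sum_equiv (Equiv.subtypeUnivEquiv (fun x => Finset.mem_univ x))
    _ (fun i => if i = 0 then r else 2) (fun a => by simp)]
  exact sum_m

lemma ncard_range_inr : (Set.range (Sum.inr : Sg r s → VV r s)).ncard = r + 2*s := by
  rw [← Nat.card_coe_set_eq, Nat.card_range_of_injective Sum.inr_injective,
    Nat.card_eq_fintype_card, card_Sg]

lemma ncard_range_inl : (Set.range (Sum.inl : Fin (s+1) → VV r s)).ncard = s+1 := by
  rw [← Nat.card_coe_set_eq, Nat.card_range_of_injective Sum.inl_injective,
    Nat.card_eq_fintype_card, Fintype.card_fin]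

lemma sg_ext {p q : Sg r s} (h1 : p.1.1 = q.1.1) (h2 : p.2.val = q.2.val) : p = q := by
  obtain ⟨⟨a,ha⟩, j⟩ := p
  obtain ⟨⟨b,hb⟩, k⟩ := q
  dsimp at h1 h2
  subst h1
  congr 1
  exact Fin.ext h2

/-- Two distinct leaves with the same support cannot both be outside a zero forcing set. -/
lemma leaf_claim {S : Set (VV r s)} {p q : Sg r s} (hpq : p ≠ q) (h1 : p.1 = q.1)
    (hp : (Sum.inr p : VV r s) ∉ S) (hq : (Sum.inr q : VV r s) ∉ S)
    (hf : (GG r s).Forced S (Sum.inr p)) : False := by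
  have key : ∀ x, (GG r s).Forced S x → (x = Sum.inr p ∨ x = Sum.inr q) → False := by
    intro x hx
    induction hx with
    | init v hv =>
      rintro (rfl | rfl)
      · exact hp hv
      · exact hq hv
    | force u w hu hadj huniq ihu ih =>
      rintro (rfl | rfl)
      · cases u with
        | inr u' => exact adj_rr hadj
        | inl a =>
          rw [adj_lr] at hadj
          refine ih (Sum.inr q) (adj_lr.2 ?_) (by simp [hpq.symm]) (Or.inr rfl)
          rw [← h1]; exact hadj
      · cases u with
        | inr u' => exact adj_rr hadj
        | inl a =>
          rw [adj_lr] at hadj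
          refine ih (Sum.inr p) (adj_lr.2 ?_) (by simp [hpq]) (Or.inl rfl)
          rw [h1]; exact hadj
  exact key _ hf (Or.inl rfl)

/-- A leaf in a total forcing set has its support in the set. -/
lemma support_mem {S : Set (VV r s)} (htot : ∀ v ∈ S, ∃ u ∈ S, (GG r s).Adj v u)
    {p : Sg r s} (hp : (Sum.inr p : VV r s) ∈ S) : (Sum.inl p.1.1 : VV r s) ∈ S := by
  obtain ⟨u, hu, hadj⟩ := htot _ hp
  cases u with
  | inl a => rw [adj_rl] at hadj; rw [hadj]; exact hu
  | inr q => exact absurd hadj adj_rr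

lemma mval_pos {a : Fin (s+1)} (hr : 3 ≤ r) : 1 < if a = 0 then r else 2 := by
  split <;> omega

lemma ft_lower (hr : 3 ≤ r) {S : Set (VV r s)} (hS : (GG r s).IsTotalForcingSet S) :
    r + 2*s ≤ S.ncard := by
  obtain ⟨hzf, htot⟩ := hS
  -- every spine vertex is in S
  have hspine : ∀ a : Fin (s+1), (Sum.inl a : VV r s) ∈ S := by
    intro a
    set p : Sg r s := lf a 0 (by have := mval_pos (a := a) hr; omega) with hpdef
    set q : Sg r s := lf a 1 (mval_pos hr) with hqdef
    have hpq : p ≠ q := by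
      intro h
      have : (0 : ℕ) = 1 := congrArg (fun x => (Sigma.snd x).val) h
      omega
    have h1 : p.1 = q.1 := rfl
    by_cases hp : (Sum.inr p : VV r s) ∈ S
    · exact support_mem htot hp
    · by_cases hq : (Sum.inr q : VV r s) ∈ S
      · exact support_mem htot hq
      · exact (leaf_claim hpq h1 hp hq (hzf _)).elim
  -- the set of leaves missing from S
  set B : Set (Sg r s) := {p : Sg r s | (Sum.inr p : VV r s) ∉ S} with hBdef
  set A : Set (Sg r s) := {p : Sg r s | (Sum.inr p : VV r s) ∈ S} with hAdef
  have hBcard : B.ncard ≤ s + 1 := by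
    have : B.ncard ≤ (Set.univ : Set (Fin (s+1))).ncard := by
      apply Set.ncard_le_ncard_of_injOn (fun p => p.1.1)
      · intro p _; trivial
      · intro p hp q hq hfst
        by_contra hne
        exact leaf_claim hne (Subtype.ext hfst) hp hq (hzf _)
    simpa [Set.ncard_univ] using this
  have hABcard : A.ncard + B.ncard = r + 2*s := by
    have : A.ncard + Aᶜ.ncard = Nat.card (Sg r s) := Set.ncard_add_ncard_compl A
    rw [Nat.card_eq_fintype_card, card_Sg] at this
    have hAB : Aᶜ = B := by ext p; simp [hAdef, hBdef]
    rwa [hAB] at this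
  have hsub : Set.range (Sum.inl : Fin (s+1) → VV r s) ∪ (Sum.inr '' A) ⊆ S := by
    rintro x (⟨a, rfl⟩ | ⟨p, hp, rfl⟩)
    · exact hspine a
    · exact hp
  have hcard2 : (Set.range (Sum.inl : Fin (s+1) → VV r s) ∪ (Sum.inr '' A)).ncard
      = (s+1) + A.ncard := by
    rw [Set.ncard_union_eq ?hd (Set.toFinite _) (Set.toFinite _), ncard_range_inl,
      Set.ncard_image_of_injective _ Sum.inr_injective]
    case hd =>
      rw [Set.disjoint_left]
      rintro x ⟨a, rfl⟩ ⟨p, _, h⟩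
      exact Sum.inl_ne_inr h.symm
  have := Set.ncard_le_ncard hsub S.toFinite
  rw [hcard2] at this
  omega


lemma lf_pos0 (hr : 3 ≤ r) (a : Fin (s+1)) : 0 < if a = 0 then r else 2 := by
  split <;> omega

def g0 (hr : 3 ≤ r) : Fin (s+1) → VV r s := fun a => Sum.inr (lf a 0 (lf_pos0 hr a))

lemma mem_compl_range_g0 {hr : 3 ≤ r} {p : Sg r s} :
    (Sum.inr p : VV r s) ∈ (Set.range (g0 (s := s) hr))ᶜ ↔ p.2.val ≠ 0 := by
  constructor
  · intro h hv
    exact h ⟨p.1.1, congrArg Sum.inr (sg_ext rfl hv.symm)⟩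
  · rintro h ⟨a, ha⟩
    apply h
    have := Sum.inr_injective ha
    have : p.2.val = (lf a 0 (lf_pos0 hr a)).2.val := by rw [← this]
    exact this

lemma inl_mem_compl_range_g0 {hr : 3 ≤ r} (a : Fin (s+1)) :
    (Sum.inl a : VV r s) ∈ (Set.range (g0 (s := s) hr))ᶜ := by
  rintro ⟨b, hb⟩
  exact Sum.inl_ne_inr hb.symm

lemma ft_upper_set (hr : 3 ≤ r) :
    (GG r s).IsTotalForcingSet (Set.range (g0 (s := s) hr))ᶜ ∧
    ((Set.range (g0 (s := s) hr))ᶜ : Set (VV r s)).ncard = r + 2*s := by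
  set S := (Set.range (g0 (s := s) hr))ᶜ with hSdef
  have hmemS : ∀ p : Sg r s, p.2.val ≠ 0 → (Sum.inr p : VV r s) ∈ S :=
    fun p h => mem_compl_range_g0.2 h
  refine ⟨⟨?_, ?_⟩, ?_⟩
  · -- zero forcing
    intro v
    by_cases hv : v ∈ S
    · exact SimpleGraph.Forced.init v hv
    · -- v = g0 a for some a
      rw [hSdef, Set.notMem_compl_iff] at hv
      obtain ⟨a, rfl⟩ := hv
      refine SimpleGraph.Forced.force (Sum.inl a) _ (SimpleGraph.Forced.init _ (inl_mem_compl_range_g0 a)) (adj_lr.2 rfl) ?_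
      intro x hadj hne
      cases x with
      | inl b => exact SimpleGraph.Forced.init _ (inl_mem_compl_range_g0 b)
      | inr q =>
        rw [adj_lr] at hadj
        refine SimpleGraph.Forced.init _ (hmemS q ?_)
        intro h0
        exact hne (congrArg Sum.inr (sg_ext hadj h0))
  · -- no isolated vertices
    intro v hv
    cases v with
    | inl a =>
      exact ⟨Sum.inr (lf a 1 (mval_pos hr)), hmemS _ (by simp [lf]), adj_lr.2 rfl⟩
    | inr p =>
      exact ⟨Sum.inl p.1.1, inl_mem_compl_range_g0 _, adj_rl.2 rfl⟩
  · -- cardinality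
    have hinj : Function.Injective (g0 (s := s) hr) := by
      intro a b hab
      have := Sum.inr_injective hab
      exact congrArg (fun p => (Sigma.fst p).1) this
    have h1 : (Set.range (g0 (s := s) hr)).ncard = s + 1 := by
      rw [← Nat.card_coe_set_eq, Nat.card_range_of_injective hinj,
        Nat.card_eq_fintype_card, Fintype.card_fin]
    have h2 : (Set.range (g0 (s := s) hr)).ncard + S.ncard = Nat.card (VV r s) := by
      rw [hSdef]
      exact Set.ncard_add_ncard_compl _
    rw [h1, Nat.card_eq_fintype_card, Fintype.card_sum, Fintype.card_fin, card_Sg] at h2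
    omega

lemma ft_exact (hr : 3 ≤ r) : (GG r s).totalForcingNumber = r + 2*s := by
  obtain ⟨hS, hcard⟩ := ft_upper_set (s := s) hr
  have hmem : r + 2*s ∈ {n | ∃ S : Set (VV r s), (GG r s).IsTotalForcingSet S ∧ S.ncard = n} :=
    ⟨_, hS, hcard⟩
  refine le_antisymm (Nat.sInf_le hmem) (le_csInf ⟨_, hmem⟩ ?_)
  rintro n ⟨S', hS', rfl⟩
  exact ft_lower hr hS'


lemma internal_two_nbrs {W : Type*} {G : SimpleGraph W} {u v : W} (w : G.Walk u v) :
    ∀ {x : W}, w.IsPath → x ∈ w.support → x ≠ u → x ≠ v →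
    ∃ y z, y ≠ z ∧ G.Adj x y ∧ G.Adj x z := by
  induction w with
  | nil =>
    intro x _ hx hxu _
    rw [SimpleGraph.Walk.support_nil] at hx
    simp at hx
    exact (hxu hx).elim
  | @cons a b c h w' ih =>
    intro x hw hx hxu hxv
    rw [SimpleGraph.Walk.support_cons] at hx
    rcases List.mem_cons.1 hx with rfl | hx'
    · exact (hxu rfl).elim
    · by_cases hxb : x = b
      · subst hxb
        cases w' with
        | nil => exact (hxv rfl).elim
        | @cons b d c2 h2 w2 =>
          refine ⟨a, d, fun hac => ?_, h.symm, h2⟩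
          have h3 := ((SimpleGraph.Walk.cons_isPath_iff _ _).1 hw).2
          apply h3
          rw [SimpleGraph.Walk.support_cons]
          exact List.mem_cons_of_mem _ (hac ▸ w2.start_mem_support)
      · exact ih ((SimpleGraph.Walk.cons_isPath_iff _ _).1 hw).1 hx' hxb hxv

lemma nbr_of_leaf {p : Sg r s} {x : VV r s} (h : (GG r s).Adj (Sum.inr p) x) :
    x = Sum.inl p.1.1 := by
  cases x with
  | inl a => rw [adj_rl] at h; rw [h]
  | inr q => exact absurd h adj_rr

open scoped Classical in
lemma leaves_in_path_le_two {Q : Set (VV r s)} (hQ : (GG r s).IsPathSet Q) :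
    (Finset.univ.filter fun p : Sg r s => Sum.inr p ∈ Q).card ≤ 2 := by
  obtain ⟨u, v, w, hw, hset⟩ := hQ
  classical
  have hmem : ∀ p : Sg r s, Sum.inr p ∈ Q → (Sum.inr p : VV r s) = u ∨ (Sum.inr p : VV r s) = v := by
    intro p hp
    by_contra hcon
    push_neg at hcon
    rw [← hset] at hp
    obtain ⟨y, z, hyz, hy, hz⟩ := internal_two_nbrs w hw hp hcon.1 hcon.2
    exact hyz ((nbr_of_leaf hy).trans (nbr_of_leaf hz).symm)
  calc (Finset.univ.filter fun p : Sg r s => Sum.inr p ∈ Q).card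
      ≤ ({u, v} : Finset (VV r s)).card := by
        apply Finset.card_le_card_of_injOn (fun p => Sum.inr p)
        · intro p hp
          simp only [Finset.mem_coe, Finset.mem_filter] at hp
          simpa using hmem p hp.2
        · intro p _ q _ hpq
          exact Sum.inr_injective hpq
    _ ≤ 2 := Finset.card_insert_le _ _ |>.trans (by simp)

lemma singleton_of_no_inl {Q : Set (VV r s)} (hQ : (GG r s).IsPathSet Q)
    (hno : ∀ a : Fin (s+1), Sum.inl a ∉ Q) : ∃ p : Sg r s, Q = {Sum.inr p} := by
  obtain ⟨u, v, w, hw, hset⟩ := hQ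
  have hu : u ∈ Q := hset ▸ w.start_mem_support
  obtain (⟨a, rfl⟩ | ⟨p, rfl⟩) : (∃ a, u = Sum.inl a) ∨ (∃ p, u = Sum.inr p) := by
    cases u with
    | inl a => exact Or.inl ⟨a, rfl⟩
    | inr p => exact Or.inr ⟨p, rfl⟩
  · exact absurd hu (hno a)
  · have huv : Sum.inr p = v := by
      by_contra huv
      cases w with
      | nil => exact huv rfl
      | @cons a b c h w' =>
        have hb : b ∈ Q := hset ▸ (SimpleGraph.Walk.support_cons _ _ ▸
          List.mem_cons_of_mem _ w'.start_mem_support)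
        rw [nbr_of_leaf h] at hb
        exact hno _ hb
    subst huv
    have : w = SimpleGraph.Walk.nil := SimpleGraph.Walk.isPath_iff_eq_nil.1 hw
    subst this
    refine ⟨p, ?_⟩
    rw [← hset]
    ext x
    simp

open scoped Classical in
lemma pc_lower (hr : 3 ≤ r) {P : Set (Set (VV r s))} (hP : (GG r s).IsPathCover P) :
    r + s - 1 ≤ P.ncard := by
  classical
  obtain ⟨hpaths, hdisj, hcover⟩ := hP
  have hPfin : P.Finite := Set.toFinite P
  set PFin : Finset (Set (VV r s)) := hPfin.toFinset with hPFin
  have hmemPFin : ∀ Q, Q ∈ PFin ↔ Q ∈ P := fun Q => hPfin.mem_toFinset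
  have hncard : P.ncard = PFin.card := by rw [← Set.ncard_coe_finset, hPfin.coe_toFinset]
  set AFin : Finset (Set (VV r s)) := PFin.filter (fun Q => ∃ a : Fin (s+1), Sum.inl a ∈ Q) with hAFin
  set BFin : Finset (Set (VV r s)) := PFin.filter (fun Q => ¬ ∃ a : Fin (s+1), Sum.inl a ∈ Q) with hBFin
  have hsplit : AFin.card + BFin.card = PFin.card := Finset.card_filter_add_card_filter_not _
  -- choice of containing path for each leaf
  have hex : ∀ p : Sg r s, ∃ Q, Q ∈ P ∧ Sum.inr p ∈ Q := by
    intro p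
    have : (Sum.inr p : VV r s) ∈ ⋃₀ P := by rw [hcover]; trivial
    obtain ⟨Q, hQ, hpQ⟩ := this
    exact ⟨Q, hQ, hpQ⟩
  choose f hfP hfmem using hex
  set UA : Finset (Sg r s) := Finset.univ.filter (fun p => f p ∈ AFin) with hUA
  set UB : Finset (Sg r s) := Finset.univ.filter (fun p => ¬ f p ∈ AFin) with hUB
  have hUsplit : UA.card + UB.card = r + 2*s := by
    rw [hUA, hUB, Finset.card_filter_add_card_filter_not, ← card_Sg]
    exact (Finset.card_univ)
  have hAcard : AFin.card ≤ s + 1 := by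
    have : AFin.card ≤ (Finset.univ : Finset (Fin (s+1))).card := by
      apply Finset.card_le_card_of_injOn (fun Q => if h : ∃ a : Fin (s+1), Sum.inl a ∈ Q then h.choose else 0)
      · intro Q _; exact Finset.mem_univ _
      · intro Q hQ Q' hQ' heq
        rw [Finset.mem_coe, Finset.mem_filter] at hQ
        rw [Finset.mem_coe, Finset.mem_filter] at hQ'
        have heq' : (if h : ∃ a : Fin (s+1), Sum.inl a ∈ Q then h.choose else 0) =
            (if h : ∃ a : Fin (s+1), Sum.inl a ∈ Q' then h.choose else 0) := heq
        rw [dif_pos hQ.2, dif_pos hQ'.2] at heq'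
        by_contra hne
        have hd := hdisj ((hmemPFin _).1 hQ.1) ((hmemPFin _).1 hQ'.1) hne
        exact Set.disjoint_left.1 hd hQ.2.choose_spec (heq' ▸ hQ'.2.choose_spec)
    simpa using this
  have hUAcard : UA.card ≤ 2 * AFin.card := by
    apply Finset.card_le_mul_card_image_of_maps_to (f := f)
    · intro p hp
      rw [hUA, Finset.mem_filter] at hp
      exact hp.2
    · intro Q hQmem
      rw [hAFin, Finset.mem_filter] at hQmem
      calc (UA.filter fun p => f p = Q).card
          ≤ (Finset.univ.filter fun p : Sg r s => Sum.inr p ∈ Q).card := by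
            apply Finset.card_le_card
            intro p hp
            rw [Finset.mem_filter] at hp ⊢
            exact ⟨Finset.mem_univ _, hp.2 ▸ hfmem p⟩
        _ ≤ 2 := leaves_in_path_le_two (hpaths _ ((hmemPFin _).1 hQmem.1))
  have hUBcard : UB.card ≤ BFin.card := by
    apply Finset.card_le_card_of_injOn f
    · intro p hp
      rw [hUB, Finset.mem_coe, Finset.mem_filter] at hp
      rw [hBFin, Finset.mem_coe, Finset.mem_filter]
      refine ⟨(hmemPFin _).2 (hfP p), ?_⟩
      intro hexa
      exact hp.2 (by rw [hAFin, Finset.mem_filter]; exact ⟨(hmemPFin _).2 (hfP p), hexa⟩)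
    · intro p hp q hq heq
      rw [Finset.mem_coe, Finset.mem_filter] at hp
      have hnoinl : ∀ a : Fin (s+1), Sum.inl a ∉ f p := by
        intro a ha
        exact hp.2 (by rw [hAFin, Finset.mem_filter]; exact ⟨(hmemPFin _).2 (hfP p), ⟨a, ha⟩⟩)
      obtain ⟨p0, hp0⟩ := singleton_of_no_inl (hpaths _ (hfP p)) hnoinl
      have h1 : Sum.inr p ∈ ({Sum.inr p0} : Set (VV r s)) := hp0 ▸ hfmem p
      have h2 : Sum.inr q ∈ ({Sum.inr p0} : Set (VV r s)) := (heq ▸ hp0) ▸ hfmem q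
      simp only [Set.mem_singleton_iff] at h1 h2
      exact Sum.inr_injective (h1.trans h2.symm)
  rw [hncard]
  omega


def Qa (hr : 3 ≤ r) (a : Fin (s+1)) : Set (VV r s) :=
  {Sum.inr (lf a 0 (by have := mval_pos (a := a) hr; omega)), Sum.inl a,
    Sum.inr (lf a 1 (mval_pos hr))}

def Rg (j : Fin r) : Set (VV r s) :=
  {Sum.inr (lf 0 j.val (by rw [if_pos rfl]; exact j.isLt))}

lemma mem_Qa {hr : 3 ≤ r} {a : Fin (s+1)} {x : VV r s} :
    x ∈ Qa hr a ↔ (x = Sum.inl a ∨ ∃ p : Sg r s, x = Sum.inr p ∧ p.1.1 = a ∧ p.2.val < 2) := by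
  constructor
  · rintro (rfl | rfl | rfl)
    · exact Or.inr ⟨_, rfl, rfl, by exact Nat.zero_lt_two⟩
    · exact Or.inl rfl
    · exact Or.inr ⟨_, rfl, rfl, by exact Nat.one_lt_two⟩
  · rintro (rfl | ⟨p, rfl, hfst, hval⟩)
    · exact Or.inr (Or.inl rfl)
    · have h2 : p.2.val = 0 ∨ p.2.val = 1 := by omega
      rcases h2 with h | h
      · rw [congrArg Sum.inr (sg_ext (q := lf a 0 (by have := mval_pos (a := a) hr; omega)) hfst h)]
        exact Set.mem_insert _ _
      · rw [congrArg Sum.inr (sg_ext (q := lf a 1 (mval_pos hr)) hfst h)]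
        exact Set.mem_insert_iff.2 (Or.inr (Set.mem_insert_iff.2 (Or.inr rfl)))

lemma lf_fst (a : Fin (s+1)) (j : ℕ) (h : j < if a = 0 then r else 2) :
    (lf a j h).1.1 = a := rfl

lemma isPathSet_Qa (hr : 3 ≤ r) (a : Fin (s+1)) : (GG r s).IsPathSet (Qa hr a) := by
  refine ⟨Sum.inr (lf a 0 (by have := mval_pos (a := a) hr; omega)), Sum.inr (lf a 1 (mval_pos hr)),
    SimpleGraph.Walk.cons (adj_rl.2 (lf_fst _ _ _))
      (SimpleGraph.Walk.cons
        (adj_lr.2 (lf_fst _ _ _) : (GG r s).Adj (Sum.inl a) (Sum.inr (lf a 1 (mval_pos hr))))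
        SimpleGraph.Walk.nil), ?_, ?_⟩
  · rw [SimpleGraph.Walk.cons_isPath_iff, SimpleGraph.Walk.cons_isPath_iff]
    refine ⟨⟨SimpleGraph.Walk.IsPath.nil, by simp⟩, ?_⟩
    simp only [SimpleGraph.Walk.support_cons, SimpleGraph.Walk.support_nil]
    intro hmem
    simp only [List.mem_cons, List.mem_singleton] at hmem
    rcases hmem with h | h | h
    · exact Sum.inr_ne_inl h
    · have : (0:ℕ) = 1 := congrArg (fun x => x.elim (fun _ => 0) (fun p => p.2.val)) h
      omega
    · simp at h
  · ext x
    simp only [SimpleGraph.Walk.support_cons, SimpleGraph.Walk.support_nil, Set.mem_setOf_eq,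
      List.mem_cons, List.mem_singleton, List.not_mem_nil, or_false]
    rw [Qa]
    simp [Set.mem_insert_iff]

lemma isPathSet_Rg (j : Fin r) : (GG r s).IsPathSet (Rg (s := s) j) := by
  refine ⟨Sum.inr (lf 0 j.val (by rw [if_pos rfl]; exact j.isLt)),
    Sum.inr (lf 0 j.val (by rw [if_pos rfl]; exact j.isLt)),
    SimpleGraph.Walk.nil, SimpleGraph.Walk.IsPath.nil, ?_⟩
  ext x
  simp [Rg]

def PC (hr : 3 ≤ r) : Set (Set (VV r s)) :=
  Set.range (Qa (s := s) hr) ∪ (Rg (s := s) '' {j : Fin r | 2 ≤ j.val})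

lemma val_lt_of_fst_ne_zero {p : Sg r s} : p.2.val < if p.1.1 = 0 then r else 2 := p.2.isLt

lemma pc_cover (hr : 3 ≤ r) : (GG r s).IsPathCover (PC (s := s) hr) := by
  refine ⟨?_, ?_, ?_⟩
  · rintro Q (⟨a, rfl⟩ | ⟨j, _, rfl⟩)
    · exact isPathSet_Qa hr a
    · exact isPathSet_Rg j
  · rintro Q (⟨a, rfl⟩ | ⟨j, hj, rfl⟩) Q' (⟨b, rfl⟩ | ⟨k, hk, rfl⟩) hne
    · -- Qa a vs Qa b
      have hab : a ≠ b := fun h => hne (by rw [h])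
      show Disjoint (Qa hr a) (Qa hr b)
      rw [Set.disjoint_left]
      intro x hx hx'
      rcases mem_Qa.1 hx with rfl | ⟨p, rfl, hfst, _⟩
      · rcases mem_Qa.1 hx' with h | ⟨p, h, _, _⟩
        · exact hab (Sum.inl_injective h)
        · exact Sum.inl_ne_inr h
      · rcases mem_Qa.1 hx' with h | ⟨q, h, hfst', _⟩
        · exact Sum.inr_ne_inl h
        · exact hab (hfst ▸ hfst' ▸ congrArg (fun y => (Sigma.fst y).1) (Sum.inr_injective h))
    · -- Qa a vs Rg k
      show Disjoint (Qa hr a) (Rg k)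
      rw [Set.disjoint_left]
      intro x hx hx'
      rw [Rg, Set.mem_singleton_iff] at hx'
      subst hx'
      rcases mem_Qa.1 hx with h | ⟨p, h, _, hval⟩
      · exact Sum.inl_ne_inr h.symm
      · have hk' : 2 ≤ k.val := hk
        have := congrArg (fun y => (Sigma.snd y).val) (Sum.inr_injective h)
        simp only [lf] at this
        omega
    · -- Rg j vs Qa b
      show Disjoint (Rg j) (Qa hr b)
      rw [Set.disjoint_left]
      intro x hx hx'
      rw [Rg, Set.mem_singleton_iff] at hx
      subst hx
      rcases mem_Qa.1 hx' with h | ⟨p, h, _, hval⟩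
      · exact Sum.inl_ne_inr h.symm
      · have hj' : 2 ≤ j.val := hj
        have := congrArg (fun y => (Sigma.snd y).val) (Sum.inr_injective h)
        simp only [lf] at this
        omega
    · -- Rg j vs Rg k
      have hjk : j ≠ k := fun h => hne (by rw [h])
      show Disjoint (Rg j) (Rg k)
      rw [Set.disjoint_left]
      intro x hx hx'
      rw [Rg, Set.mem_singleton_iff] at hx hx'
      subst hx
      have := congrArg (fun y => (Sigma.snd y).val) (Sum.inr_injective hx')
      simp only [lf] at this
      exact hjk (Fin.ext this)
  · ext x
    simp only [Set.mem_sUnion, Set.mem_univ, iff_true]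
    cases x with
    | inl a => exact ⟨Qa hr a, Or.inl ⟨a, rfl⟩, mem_Qa.2 (Or.inl rfl)⟩
    | inr p =>
      by_cases hval : p.2.val < 2
      · exact ⟨Qa hr p.1.1, Or.inl ⟨p.1.1, rfl⟩, mem_Qa.2 (Or.inr ⟨p, rfl, rfl, hval⟩)⟩
      · push_neg at hval
        obtain ⟨n, hn⟩ : ∃ n : ℕ, p.2.val = n := ⟨_, rfl⟩
        have hisLt : n < if p.1.1 = 0 then r else 2 := hn ▸ p.2.isLt
        have hfst0 : p.1.1 = 0 := by
          by_contra h0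
          rw [if_neg h0] at hisLt
          omega
        rw [if_pos hfst0] at hisLt
        refine ⟨Rg ⟨n, hisLt⟩, Or.inr ⟨⟨n, hisLt⟩, by simp; omega, rfl⟩, ?_⟩
        rw [Rg, Set.mem_singleton_iff]
        exact congrArg Sum.inr (sg_ext hfst0 hn)

lemma pc_card (hr : 3 ≤ r) : (PC (s := s) hr).ncard = r - 1 + s := by
  rw [PC, Set.ncard_union_eq ?hd (Set.toFinite _) (Set.toFinite _)]
  case hd =>
    rw [Set.disjoint_left]
    rintro Q ⟨a, rfl⟩ ⟨j, _, hj⟩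
    have : (Sum.inl a : VV r s) ∈ Rg (s := s) j := hj ▸ mem_Qa.2 (Or.inl rfl)
    rw [Rg, Set.mem_singleton_iff] at this
    exact Sum.inl_ne_inr this
  have h1 : (Set.range (Qa (s := s) hr)).ncard = s + 1 := by
    have hinj : Function.Injective (Qa (s := s) hr) := by
      intro a b hab
      have : (Sum.inl a : VV r s) ∈ Qa hr b := hab ▸ mem_Qa.2 (Or.inl rfl)
      rcases mem_Qa.1 this with h | ⟨p, h, _, _⟩
      · exact Sum.inl_injective h
      · exact absurd h (Sum.inl_ne_inr)
    rw [← Nat.card_coe_set_eq, Nat.card_range_of_injective hinj,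
      Nat.card_eq_fintype_card, Fintype.card_fin]
  have h2 : (Rg (s := s) '' {j : Fin r | 2 ≤ j.val}).ncard = r - 2 := by
    have hinj : Function.Injective (Rg (s := s) (r := r)) := by
      intro j k hjk
      have : (Sum.inr (lf 0 j.val (by rw [if_pos rfl]; exact j.isLt)) : VV r s) ∈ Rg (s := s) k := by
        rw [← hjk]; exact rfl
      rw [Rg, Set.mem_singleton_iff] at this
      have := congrArg (fun y => (Sigma.snd y).val) (Sum.inr_injective this)
      exact Fin.ext this
    rw [Set.ncard_image_of_injective _ hinj]
    have hval : Function.Injective (Fin.val : Fin r → ℕ) := Fin.val_injective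
    rw [← Set.ncard_image_of_injective _ hval]
    have himg : Fin.val '' {j : Fin r | 2 ≤ j.val} = ↑(Finset.Ico 2 r) := by
      ext n
      simp only [Set.mem_image, Set.mem_setOf_eq, Finset.coe_Ico, Set.mem_Ico]
      constructor
      · rintro ⟨j, hj, rfl⟩; exact ⟨hj, j.isLt⟩
      · rintro ⟨h2, hlt⟩; exact ⟨⟨n, hlt⟩, h2, rfl⟩
    rw [himg, Set.ncard_coe_finset, Nat.card_Ico]
  rw [h1, h2]
  omega

lemma pc_exact (hr : 3 ≤ r) : (GG r s).pathCoverNumber = r - 1 + s := by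
  have hmem : r - 1 + s ∈ {n | ∃ P : Set (Set (VV r s)), (GG r s).IsPathCover P ∧ P.ncard = n} :=
    ⟨PC hr, pc_cover hr, pc_card hr⟩
  refine le_antisymm (Nat.sInf_le hmem) (le_csInf ⟨_, hmem⟩ ?_)
  rintro n ⟨P, hP, rfl⟩
  have := pc_lower hr hP
  omega

end Aux

theorem stmt18 (r s : ℕ) (hr : 3 ≤ r) (hs : 1 ≤ s) :
    (attachLeaves (SimpleGraph.pathGraph (s + 1)) Finset.univ
        (fun i => if i = 0 then r else 2)).pathCoverNumber = r - 1 + s ∧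
    (attachLeaves (SimpleGraph.pathGraph (s + 1)) Finset.univ
        (fun i => if i = 0 then r else 2)).totalForcingNumber = r + 2 * s := by
  exact ⟨Aux.pc_exact hr, Aux.ft_exact hr⟩
end
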